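/- arXiv:1305.3000 — 8 statements merged into one kernel-verified Lean document; each statement's English description precedes it below -/
import Mathlib

section
/- For λ = (λ₁,...,λₙ) ∈ ℝⁿ, the set Γₖ⁺ defined as the connected component of {σₖ(λ) > 0} containing (1,...,1) equals the set {λ : σ₁(λ) > 0, σ₂(λ) > 0, ..., σₖ(λ) > 0}. -/
/-- The `k`-th elementary symmetric polynomial of `lam : Fin n → ℝ`. -/
noncomputable def esymm (n k : ℕ) (lam : Fin n → ℝ) : ℝ :=
  ∑ s ∈ Finset.powersetCard k (Finset.univ : Finset (Fin n)), ∏ i ∈ s, lam i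

/-- Membership in the Garding cone `Γₖ⁺`: all `σⱼ > 0` for `1 ≤ j ≤ k`. -/
def inGamma (n k : ℕ) (lam : Fin n → ℝ) : Prop :=
  ∀ j : ℕ, 1 ≤ j → j ≤ k → 0 < esymm n j lam

namespace GammaAux

open Polynomial

/-! ### Multiset positivity lemmas -/

lemma multiset_prod_pos {s : Multiset ℝ} (h : ∀ x ∈ s, 0 < x) : 0 < s.prod := by
  induction s using Multiset.induction_on with
  | empty => simp
  | cons a s ih =>
    rw [Multiset.prod_cons]
    exact mul_pos (h a (Multiset.mem_cons_self a s))
      (ih fun x hx => h x (Multiset.mem_cons_of_mem hx))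

lemma multiset_sum_pos {s : Multiset ℝ} (h : ∀ x ∈ s, 0 < x) (hs : s ≠ 0) : 0 < s.sum := by
  induction s using Multiset.induction_on with
  | empty => exact absurd rfl hs
  | cons a s ih =>
    rw [Multiset.sum_cons]
    rcases eq_or_ne s 0 with rfl | hs'
    · simpa using h a (Multiset.mem_cons_self a _)
    · exact add_pos (h a (Multiset.mem_cons_self a _))
        (ih (fun x hx => h x (Multiset.mem_cons_of_mem hx)) hs')

lemma multiset_esymm_pos {s : Multiset ℝ} (h : ∀ x ∈ s, 0 < x) {j : ℕ}
    (hj : j ≤ Multiset.card s) : 0 < s.esymm j := by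
  unfold Multiset.esymm
  apply multiset_sum_pos
  · intro x hx
    rw [Multiset.mem_map] at hx
    obtain ⟨t, ht, rfl⟩ := hx
    rw [Multiset.mem_powersetCard] at ht
    exact multiset_prod_pos fun y hy => h y (Multiset.mem_of_le ht.1 hy)
  · intro hc
    have := congrArg Multiset.card hc
    rw [Multiset.card_map, Multiset.card_powersetCard, Multiset.card_zero] at this
    exact (Nat.choose_pos hj).ne' this

/-! ### The polynomials -/

noncomputable def fpoly (n : ℕ) (lam : Fin n → ℝ) : ℝ[X] :=
  ∏ i : Fin n, (X + C (lam i))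

noncomputable def gpoly (n k : ℕ) (lam : Fin n → ℝ) : ℝ[X] :=
  derivative^[n - k] (fpoly n lam)

lemma fpoly_monic (n : ℕ) (lam : Fin n → ℝ) : (fpoly n lam).Monic :=
  monic_prod_of_monic _ _ fun i _ => monic_X_add_C (lam i)

lemma fpoly_natDegree (n : ℕ) (lam : Fin n → ℝ) : (fpoly n lam).natDegree = n := by
  rw [fpoly, natDegree_prod_of_monic _ _ fun i _ => monic_X_add_C (lam i)]
  simp [natDegree_X_add_C]

lemma fpoly_splits (n : ℕ) (lam : Fin n → ℝ) : (fpoly n lam).Splits :=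
  Splits.prod fun i _ =>
    Splits.of_natDegree_le_one (le_of_eq (natDegree_X_add_C (lam i)))

lemma fpoly_coeff (n : ℕ) (lam : Fin n → ℝ) {j : ℕ} (hj : j ≤ n) :
    (fpoly n lam).coeff (n - j) = esymm n j lam := by
  have h : n - j ≤ (Finset.univ : Finset (Fin n)).card := by
    rw [Finset.card_univ, Fintype.card_fin]
    omega
  have h2 := Finset.prod_X_add_C_coeff (Finset.univ : Finset (Fin n)) lam h
  rw [fpoly, h2]
  have h3 : (Finset.univ : Finset (Fin n)).card - (n - j) = j := by
    rw [Finset.card_univ, Fintype.card_fin]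
    omega
  rw [h3]
  rfl

lemma esymm_zero_eq_one (n : ℕ) (lam : Fin n → ℝ) : esymm n 0 lam = 1 := by
  simp [esymm]

lemma fpoly_roots_card (n : ℕ) (lam : Fin n → ℝ) :
    Multiset.card (fpoly n lam).roots = n := by
  rw [splits_iff_card_roots.mp (fpoly_splits n lam), fpoly_natDegree]

lemma iter_deriv_roots_card_ge (n : ℕ) (lam : Fin n → ℝ) (m : ℕ) :
    (n : ℤ) - m ≤ Multiset.card (derivative^[m] (fpoly n lam)).roots := by
  induction m with
  | zero => simp [fpoly_roots_card]
  | succ m ih =>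
    have h := Polynomial.card_roots_le_derivative (derivative^[m] (fpoly n lam))
    rw [Function.iterate_succ_apply']
    push_cast at h ⊢
    omega

lemma gpoly_natDegree (n k : ℕ) (hk : 1 ≤ k) (hkn : k ≤ n) (lam : Fin n → ℝ) :
    (gpoly n k lam).natDegree = k ∧ Multiset.card (gpoly n k lam).roots = k ∧
      gpoly n k lam ≠ 0 := by
  have hdeg : (gpoly n k lam).natDegree ≤ k := by
    have := Polynomial.natDegree_iterate_derivative (fpoly n lam) (n - k)
    rw [fpoly_natDegree] at this
    rw [gpoly]
    omega
  have hcard : (k : ℤ) ≤ Multiset.card (gpoly n k lam).roots := by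
    have := iter_deriv_roots_card_ge n lam (n - k)
    rw [gpoly]
    push_cast at this ⊢
    omega
  have hcard' : k ≤ Multiset.card (gpoly n k lam).roots := by exact_mod_cast hcard
  have hle := Polynomial.card_roots' (gpoly n k lam)
  have h1 : (gpoly n k lam).natDegree = k := by omega
  have h2 : Multiset.card (gpoly n k lam).roots = k := by omega
  refine ⟨h1, h2, ?_⟩
  intro h0
  rw [h0, Polynomial.roots_zero] at h2
  simp at h2
  omega

lemma gpoly_coeff (n k : ℕ) (hkn : k ≤ n) (lam : Fin n → ℝ) {j : ℕ} (hj : j ≤ k) :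
    (gpoly n k lam).coeff (k - j) =
      ((n - j).descFactorial (n - k) : ℝ) * esymm n j lam := by
  rw [gpoly, Polynomial.coeff_iterate_derivative]
  have h1 : k - j + (n - k) = n - j := by omega
  rw [h1, nsmul_eq_mul, fpoly_coeff n lam (by omega)]

lemma descFactorial_pos' {n k j : ℕ} (hj : j ≤ k) (hkn : k ≤ n) :
    (0 : ℝ) < ((n - j).descFactorial (n - k) : ℝ) := by
  have : (n - j).descFactorial (n - k) ≠ 0 := by
    rw [Ne, Nat.descFactorial_eq_zero_iff_lt]
    omega
  positivity

/-- A "representation" of `lam`: `gpoly` factors with positive leading coefficient and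
all roots negative. -/
def Rep (n k : ℕ) (lam : Fin n → ℝ) : Prop :=
  ∃ (L : ℝ) (t : Multiset ℝ), 0 < L ∧ Multiset.card t = k ∧ (∀ b ∈ t, 0 < b) ∧
    gpoly n k lam = C L * (t.map fun b => X + C b).prod

lemma rep_inGamma {n k : ℕ} (hkn : k ≤ n) {lam : Fin n → ℝ} (h : Rep n k lam) :
    inGamma n k lam := by
  obtain ⟨L, t, hL, htc, htpos, heq⟩ := h
  intro j hj1 hj2
  have hle : k - j ≤ Multiset.card t := by rw [htc]; omega
  have hcoeff : (gpoly n k lam).coeff (k - j) = L * t.esymm j := by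
    rw [heq, coeff_C_mul, Multiset.prod_X_add_C_coeff t hle, htc]
    have h4 : k - (k - j) = j := by omega
    rw [h4]
  have h2 := gpoly_coeff n k hkn lam hj2
  have hjt : j ≤ Multiset.card t := by rw [htc]; omega
  have h3 : 0 < L * t.esymm j :=
    mul_pos hL (multiset_esymm_pos htpos hjt)
  rw [← hcoeff, h2] at h3
  have hd := descFactorial_pos' hj2 hkn (n := n)
  nlinarith [h3, hd]

lemma nonneg_rep {n k : ℕ} (hk : 1 ≤ k) (hkn : k ≤ n) {lam : Fin n → ℝ}
    (hnn : ∀ j, 1 ≤ j → j ≤ k → 0 ≤ esymm n j lam) (hpos : 0 < esymm n k lam) :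
    Rep n k lam := by
  obtain ⟨hdeg, hcard, hne⟩ := gpoly_natDegree n k hk hkn lam
  set g := gpoly n k lam with hg
  -- coefficients of g are nonneg, and coeff 0 > 0
  have hcoeff_nonneg : ∀ i, 0 ≤ g.coeff i := by
    intro i
    rcases le_or_gt i k with hik | hik
    · have hji : k - i ≤ k := Nat.sub_le k i
      have h5 := gpoly_coeff n k hkn lam (j := k - i) hji
      have hki : k - (k - i) = i := by omega
      rw [hki] at h5
      rw [hg, h5]
      rcases Nat.eq_zero_or_pos (k - i) with h0 | h0
      · rw [h0, esymm_zero_eq_one]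
        positivity
      · exact mul_nonneg (by positivity) (hnn _ h0 hji)
    · rw [hg]
      refine le_of_eq (Polynomial.coeff_eq_zero_of_natDegree_lt ?_).symm
      rw [← hg, hdeg]
      omega
  have hcoeff0 : 0 < g.coeff 0 := by
    have h5 := gpoly_coeff n k hkn lam (le_refl k)
    rw [Nat.sub_self] at h5
    rw [hg, h5]
    exact mul_pos (descFactorial_pos' (le_refl k) hkn) hpos
  -- g is positive on [0, ∞)
  have heval : ∀ x : ℝ, 0 ≤ x → 0 < g.eval x := by
    intro x hx
    rw [Polynomial.eval_eq_sum_range]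
    apply Finset.sum_pos'
    · intro i _
      exact mul_nonneg (hcoeff_nonneg i) (by positivity)
    · refine ⟨0, Finset.mem_range.mpr (Nat.succ_pos _), ?_⟩
      simpa using hcoeff0
  -- all roots are negative
  have hroots_neg : ∀ r ∈ g.roots, r < 0 := by
    intro r hr
    by_contra hge
    push_neg at hge
    have h1 := heval r hge
    have h2 : g.eval r = 0 := (Polynomial.mem_roots hne).mp hr
    rw [h2] at h1
    exact lt_irrefl 0 h1
  -- leading coefficient positive
  have hlead : 0 < g.leadingCoeff := by
    rw [Polynomial.leadingCoeff, hdeg]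
    have h5 := gpoly_coeff n k hkn lam (j := 0) (Nat.zero_le k)
    rw [Nat.sub_zero, Nat.sub_zero, esymm_zero_eq_one, mul_one] at h5
    rw [hg, h5]
    exact descFactorial_pos' (Nat.zero_le k) hkn
  -- factorization
  have hsplits : g.Splits := by
    rw [splits_iff_card_roots, hdeg, hcard]
  have hfact := Polynomial.Splits.eq_prod_roots hsplits
  refine ⟨g.leadingCoeff, g.roots.map (fun a => -a), hlead, ?_, ?_, ?_⟩
  · rw [Multiset.card_map, hcard]
  · intro b hb
    rw [Multiset.mem_map] at hb
    obtain ⟨r, hr, rfl⟩ := hb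
    simpa using hroots_neg r hr
  · have hmaps : (g.roots.map fun a => X - C a) =
        (g.roots.map fun a => -a).map (fun b => X + C b) := by
      rw [Multiset.map_map]
      apply Multiset.map_congr rfl
      intro r _
      simp [sub_eq_add_neg]
    rw [← hg, ← hmaps]
    exact hfact

lemma fpoly_shift (n : ℕ) (lam : Fin n → ℝ) (c : ℝ) :
    fpoly n (fun i => lam i + c) = (fpoly n lam).comp (X + C c) := by
  rw [fpoly, fpoly, Polynomial.prod_comp]
  apply Finset.prod_congr rfl
  intro i _
  rw [Polynomial.add_comp, Polynomial.X_comp, Polynomial.C_comp, C_add]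
  ring

lemma iterate_derivative_comp_X_add_C (p : ℝ[X]) (c : ℝ) (m : ℕ) :
    derivative^[m] (p.comp (X + C c)) = (derivative^[m] p).comp (X + C c) := by
  induction m with
  | zero => simp
  | succ m ih =>
    rw [Function.iterate_succ_apply', Function.iterate_succ_apply', ih,
      Polynomial.derivative_comp]
    simp

lemma gpoly_shift (n k : ℕ) (lam : Fin n → ℝ) (c : ℝ) :
    gpoly n k (fun i => lam i + c) = (gpoly n k lam).comp (X + C c) := by
  rw [gpoly, gpoly, fpoly_shift, iterate_derivative_comp_X_add_C]

lemma rep_shift {n k : ℕ} {lam : Fin n → ℝ} (h : Rep n k lam) {c : ℝ} (hc : 0 ≤ c) :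
    Rep n k (fun i => lam i + c) := by
  obtain ⟨L, t, hL, htc, htpos, heq⟩ := h
  refine ⟨L, t.map (fun b => b + c), hL, by rw [Multiset.card_map, htc], ?_, ?_⟩
  · intro b hb
    rw [Multiset.mem_map] at hb
    obtain ⟨r, hr, rfl⟩ := hb
    have := htpos r hr
    linarith
  · rw [gpoly_shift, heq, Polynomial.mul_comp, Polynomial.C_comp,
      Polynomial.multiset_prod_comp, Multiset.map_map, Multiset.map_map]
    congr 1
    apply congrArg Multiset.prod
    apply Multiset.map_congr rfl
    intro r _
    simp only [Function.comp_apply, Polynomial.add_comp, Polynomial.X_comp,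
      Polynomial.C_comp, C_add]
    ring

lemma esymm_smul (n j : ℕ) (lam : Fin n → ℝ) (c : ℝ) :
    esymm n j (fun i => c * lam i) = c ^ j * esymm n j lam := by
  unfold esymm
  rw [Finset.mul_sum]
  apply Finset.sum_congr rfl
  intro s hs
  rw [Finset.mem_powersetCard] at hs
  rw [Finset.prod_mul_distrib, Finset.prod_const, hs.2]

lemma esymm_one_fn (n j : ℕ) : esymm n j (fun _ => 1) = (n.choose j : ℝ) := by
  unfold esymm
  simp [Finset.card_powersetCard, Finset.card_univ]

lemma inGamma_one {n k : ℕ} (hkn : k ≤ n) : inGamma n k (fun _ => 1) := by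
  intro j hj1 hj2
  rw [esymm_one_fn]
  exact_mod_cast Nat.choose_pos (by omega)

lemma inGamma_rep {n k : ℕ} (hk : 1 ≤ k) (hkn : k ≤ n) {lam : Fin n → ℝ}
    (h : inGamma n k lam) : Rep n k lam :=
  nonneg_rep hk hkn (fun j hj1 hj2 => (h j hj1 hj2).le) (h k hk (le_refl k))

lemma continuous_esymm (n j : ℕ) : Continuous (esymm n j) := by
  unfold esymm
  exact continuous_finset_sum _ fun s _ => continuous_finset_prod _ fun i _ => continuous_apply i

/-- Key lemma: a point of `{σₖ > 0}` in the closure of the cone lies in the cone. -/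
lemma closure_key {n k : ℕ} (hk : 1 ≤ k) (hkn : k ≤ n) {x : Fin n → ℝ}
    (hx : x ∈ closure {lam : Fin n → ℝ | inGamma n k lam}) (hxk : 0 < esymm n k x) :
    inGamma n k x := by
  have hnn : ∀ j, 1 ≤ j → j ≤ k → 0 ≤ esymm n j x := by
    intro j hj1 hj2
    have hcl : closure {lam : Fin n → ℝ | inGamma n k lam} ⊆
        {lam : Fin n → ℝ | 0 ≤ esymm n j lam} := by
      apply closure_minimal
      · intro y hy
        exact (hy j hj1 hj2).le
      · exact isClosed_le continuous_const (continuous_esymm n j)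
    exact hcl hx
  exact rep_inGamma hkn (nonneg_rep hk hkn hnn hxk)

lemma isOpen_gamma (n k : ℕ) : IsOpen {lam : Fin n → ℝ | inGamma n k lam} := by
  have : {lam : Fin n → ℝ | inGamma n k lam} =
      ⋂ j ∈ Finset.Icc 1 k, {lam : Fin n → ℝ | 0 < esymm n j lam} := by
    ext x
    simp only [Set.mem_iInter, Set.mem_setOf_eq, Finset.mem_Icc]
    constructor
    · intro h j hj
      exact h j hj.1 hj.2
    · intro h j hj1 hj2
      exact h j ⟨hj1, hj2⟩
  rw [this]
  exact isOpen_biInter_finset fun j _ =>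
    isOpen_lt continuous_const (continuous_esymm n j)

end GammaAux

open GammaAux

/-- The connected component of `{σₖ > 0}` containing `(1,...,1)` equals
`{λ : σ₁(λ) > 0, ..., σₖ(λ) > 0}`. -/
theorem gamma_cone_eq_component (n k : ℕ) (hk : 1 ≤ k) (hkn : k ≤ n) :
    connectedComponentIn {lam : Fin n → ℝ | 0 < esymm n k lam} (fun _ => 1)
      = {lam : Fin n → ℝ | inGamma n k lam} := by
  set U : Set (Fin n → ℝ) := {lam | 0 < esymm n k lam} with hU
  set G : Set (Fin n → ℝ) := {lam | inGamma n k lam} with hG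
  have h1G : (fun _ => (1 : ℝ)) ∈ G := inGamma_one hkn
  have h1U : (fun _ => (1 : ℝ)) ∈ U := h1G k hk (le_refl k)
  have hGU : G ⊆ U := fun x hx => hx k hk (le_refl k)
  apply Set.Subset.antisymm
  · -- component ⊆ G
    set Cc := connectedComponentIn U (fun _ => (1 : ℝ)) with hCc
    have hCU : Cc ⊆ U := connectedComponentIn_subset U _
    have hCpre : IsPreconnected Cc := isPreconnected_connectedComponentIn
    by_contra hcon
    rw [Set.not_subset] at hcon
    obtain ⟨x, hxC, hxG⟩ := hcon
    have hxc : x ∉ closure G := by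
      intro hxc
      exact hxG (closure_key hk hkn hxc (hCU hxC))
    have key := hCpre G (closure G)ᶜ (isOpen_gamma n k) (isOpen_compl_iff.mpr isClosed_closure)
      (by
        intro y hy
        by_cases h : y ∈ closure G
        · exact Or.inl (closure_key hk hkn h (hCU hy))
        · exact Or.inr h)
      ⟨fun _ => 1, mem_connectedComponentIn h1U, h1G⟩
      ⟨x, hxC, hxc⟩
    obtain ⟨y, _, hyG, hyc⟩ := key
    exact hyc (subset_closure hyG)
  · -- G ⊆ component
    intro lam hlam
    have hrep : Rep n k lam := inGamma_rep hk hkn hlam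
    set w : Fin n → ℝ := fun i => lam i + 1 with hw
    set s1 := segment ℝ lam w with hs1
    set s2 := segment ℝ (fun _ => (1 : ℝ)) w with hs2
    have hsub : s1 ∪ s2 ⊆ U := by
      rintro x (hx | hx)
      · obtain ⟨a, b, ha, hb, hab, hx⟩ := hx
        have hxe : x = fun i => lam i + b := by
          rw [← hx]
          funext i
          simp only [Pi.add_apply, Pi.smul_apply, smul_eq_mul, hw]
          linear_combination lam i * hab
        rw [hxe]
        exact (rep_inGamma hkn (rep_shift hrep hb)) k hk (le_refl k)
      · obtain ⟨a, b, ha, hb, hab, hx⟩ := hx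
        have hxe : x = fun i => 1 + b * lam i := by
          rw [← hx]
          funext i
          simp only [Pi.add_apply, Pi.smul_apply, smul_eq_mul, hw]
          linear_combination hab
        rcases eq_or_lt_of_le hb with hb0 | hb0
        · rw [hxe, ← hb0]
          simpa using h1U
        · have hinner : inGamma n k (fun i => lam i + 1 / b) :=
            rep_inGamma hkn (rep_shift hrep (by positivity))
          have hxe2 : x = fun i => b * (lam i + 1 / b) := by
            rw [hxe]
            funext i
            have hb' : b ≠ 0 := ne_of_gt hb0
            field_simp
            ring
          rw [hxe2]
          show 0 < esymm n k (fun i => b * (lam i + 1 / b))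
          rw [esymm_smul]
          exact mul_pos (by positivity) (hinner k hk (le_refl k))
    have hwmem1 : w ∈ s1 := right_mem_segment ℝ lam w
    have hwmem2 : w ∈ s2 := right_mem_segment ℝ _ w
    have hpre : IsPreconnected (s1 ∪ s2) :=
      IsPreconnected.union w hwmem1 hwmem2
        (convex_segment lam w).isPreconnected
        (convex_segment _ w).isPreconnected
    have h1mem : (fun _ => (1 : ℝ)) ∈ s1 ∪ s2 :=
      Or.inr (left_mem_segment ℝ (fun _ => (1 : ℝ)) w)
    have hlammem : lam ∈ s1 ∪ s2 := Or.inl (left_mem_segment ℝ lam w)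
    exact hpre.subset_connectedComponentIn h1mem hsub hlammem
end

section
/- The set Γₖ⁺ = {λ ∈ ℝⁿ : σ₁(λ) > 0, ..., σₖ(λ) > 0} is an open convex cone, i.e. it is open, closed under addition, and closed under multiplication by positive scalars. -/
namespace Garding
open Polynomial Finset

variable {R : Type*} [CommRing R]

noncomputable def sig (n k : ℕ) (u : Fin n → R) : R :=
  ∑ s ∈ Finset.powersetCard k (Finset.univ : Finset (Fin n)), ∏ i ∈ s, u i

lemma esymm_eq_sig (n k : ℕ) (lam : Fin n → ℝ) : esymm n k lam = sig n k lam := rfl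

noncomputable def symPoly (n k : ℕ) (w v : Fin n → R) : R[X] :=
  ∑ s ∈ Finset.powersetCard k (Finset.univ : Finset (Fin n)),
    ∏ i ∈ s, (C (w i) + C (v i) * X)

lemma eval_symPoly (n k : ℕ) (w v : Fin n → R) (t : R) :
    (symPoly n k w v).eval t = sig n k (fun i => w i + t * v i) := by
  rw [symPoly, eval_finset_sum]
  refine Finset.sum_congr rfl fun s _ => ?_
  rw [eval_prod]
  exact Finset.prod_congr rfl fun i _ => by simp only [eval_add, eval_C, eval_mul, eval_X]; ring

lemma map_symPoly {S : Type*} [CommRing S] (f : R →+* S) (n k : ℕ) (w v : Fin n → R) :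
    (symPoly n k w v).map f = symPoly n k (f ∘ w) (f ∘ v) := by
  simp [symPoly, Polynomial.map_sum, Polynomial.map_prod, Function.comp]

lemma coeff_symPoly (n k : ℕ) (w v : Fin n → R) (m : ℕ) :
    (symPoly n k w v).coeff m = ∑ s ∈ Finset.powersetCard k (Finset.univ : Finset (Fin n)),
      ∑ t ∈ s.powerset, (if t.card = m then (∏ i ∈ t, v i) * (∏ i ∈ s \ t, w i) else 0) := by
  rw [symPoly, finset_sum_coeff]
  refine Finset.sum_congr rfl fun s _ => ?_
  have : (∏ i ∈ s, (C (w i) + C (v i) * X)) = ∏ i ∈ s, (C (v i) * X + C (w i)) :=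
    Finset.prod_congr rfl fun i _ => add_comm _ _
  rw [this, Finset.prod_add, finset_sum_coeff]
  refine Finset.sum_congr rfl fun t _ => ?_
  have h1 : (∏ i ∈ t, (C (v i) * X)) * (∏ i ∈ s \ t, C (w i))
      = C ((∏ i ∈ t, v i) * (∏ i ∈ s \ t, w i)) * X ^ t.card := by
    rw [Finset.prod_mul_distrib, Finset.prod_const, map_mul, map_prod, map_prod]
    ring
  rw [h1, coeff_C_mul, coeff_X_pow]
  by_cases h : t.card = m
  · simp [h]
  · rw [if_neg h, if_neg fun hh => h hh.symm, mul_zero]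

lemma coeff_symPoly_top (n k : ℕ) (w v : Fin n → R) :
    (symPoly n k w v).coeff k = sig n k v := by
  rw [coeff_symPoly, sig]
  refine Finset.sum_congr rfl fun s hs => ?_
  simp only [Finset.mem_powersetCard] at hs
  rw [Finset.sum_eq_single s]
  · simp [hs.2]
  · intro t ht hne
    simp only [Finset.mem_powerset] at ht
    have : t.card = k → False := fun hc => hne <| Finset.eq_of_subset_of_card_le ht <| by
      rw [hs.2, hc]
    simp only [ite_eq_right_iff]
    intro hc; exact absurd hc this
  · intro h; exact absurd (Finset.mem_powerset.2 (Finset.Subset.refl s)) h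

lemma natDegree_linear_le (a b : R) : (C a + C b * X).natDegree ≤ 1 := by
  refine (natDegree_add_le _ _).trans ?_
  simp only [natDegree_C, max_le_iff]
  exact ⟨Nat.zero_le _, (natDegree_mul_le).trans (by simp [natDegree_X_le])⟩

lemma natDegree_symPoly_le (n k : ℕ) (w v : Fin n → R) :
    (symPoly n k w v).natDegree ≤ k := by
  refine Polynomial.natDegree_sum_le_of_forall_le _ _ fun s hs => ?_
  simp only [Finset.mem_powersetCard] at hs
  refine (natDegree_prod_le _ _).trans ?_
  have := Finset.sum_le_card_nsmul s (fun i => (C (w i) + C (v i) * X).natDegree) 1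
    (fun i _ => natDegree_linear_le _ _)
  simpa [hs.2] using this

lemma natDegree_symPoly {F : Type*} [Field F] (n k : ℕ) (w v : Fin n → F)
    (hv : sig n k v ≠ 0) : (symPoly n k w v).natDegree = k := by
  refine le_antisymm (natDegree_symPoly_le n k w v) (le_natDegree_of_ne_zero ?_)
  rw [coeff_symPoly_top]; exact hv

lemma leadingCoeff_symPoly {F : Type*} [Field F] (n k : ℕ) (w v : Fin n → F)
    (hv : sig n k v ≠ 0) : (symPoly n k w v).leadingCoeff = sig n k v := by
  rw [leadingCoeff, natDegree_symPoly n k w v hv, coeff_symPoly_top]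

section RealRooted
lemma derivative_finset_prod {R : Type*} [CommRing R] {ι : Type*} [DecidableEq ι]
    (s : Finset ι) (f : ι → R[X]) :
    derivative (∏ i ∈ s, f i) = ∑ i ∈ s, (∏ j ∈ s.erase i, f j) * derivative (f i) := by
  rw [Finset.prod_eq_multiset_prod, derivative_prod, Finset.sum_eq_multiset_sum]
  congr 1

variable {n : ℕ}

lemma sum_powersetCard_erase {M : Type*} [AddCommMonoid M] (k : ℕ) (hk : 1 ≤ k)
    (f : Finset (Fin n) → M) :
    ∑ S ∈ powersetCard k (univ : Finset (Fin n)), ∑ j ∈ S, f (S.erase j)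
    = ∑ T ∈ powersetCard (k-1) (univ : Finset (Fin n)), (n - (k-1)) • f T := by
  have hR : ∀ T ∈ powersetCard (k-1) (univ : Finset (Fin n)),
      (n - (k-1)) • f T = ∑ _j ∈ univ \ T, f T := by
    intro T hT
    rw [Finset.sum_const]
    congr 1
    rw [Finset.card_univ_diff, (Finset.mem_powersetCard.1 hT).2]
    simp
  rw [Finset.sum_congr rfl hR, Finset.sum_sigma' (powersetCard k (univ : Finset (Fin n))),
    Finset.sum_sigma' (powersetCard (k-1) (univ : Finset (Fin n)))]
  refine Finset.sum_nbij' (fun p => ⟨p.1.erase p.2, p.2⟩) (fun p => ⟨insert p.2 p.1, p.2⟩)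
    ?_ ?_ ?_ ?_ ?_
  · rintro ⟨S, j⟩ hp
    simp only [Finset.mem_sigma, Finset.mem_powersetCard] at hp ⊢
    obtain ⟨⟨hSu, hCard⟩, hj⟩ := hp
    refine ⟨⟨Finset.subset_univ _, ?_⟩, ?_⟩
    · rw [Finset.card_erase_of_mem hj, hCard]
    · simp [Finset.mem_sdiff]
  · rintro ⟨T, j⟩ hp
    simp only [Finset.mem_sigma, Finset.mem_powersetCard, Finset.mem_sdiff] at hp ⊢
    obtain ⟨⟨hTu, hCard⟩, _, hj⟩ := hp
    refine ⟨⟨Finset.subset_univ _, ?_⟩, Finset.mem_insert_self _ _⟩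
    rw [Finset.card_insert_of_notMem hj, hCard]
    omega
  · rintro ⟨S, j⟩ hp
    simp only [Finset.mem_sigma] at hp
    exact Sigma.ext (Finset.insert_erase hp.2) (heq_of_eq rfl)
  · rintro ⟨T, j⟩ hp
    simp only [Finset.mem_sigma, Finset.mem_sdiff] at hp
    exact Sigma.ext (Finset.erase_insert hp.2.2) (heq_of_eq rfl)
  · rintro ⟨S, j⟩ _
    rfl

lemma derivative_symPoly_one (x : Fin n → ℝ) (k : ℕ) (hk : 1 ≤ k) :
    derivative (symPoly n k x (fun _ => (1:ℝ)))
      = (n - (k-1)) • symPoly n (k-1) x (fun _ => (1:ℝ)) := by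
  rw [symPoly, derivative_sum]
  have h1 : ∀ S ∈ powersetCard k (univ : Finset (Fin n)),
      derivative (∏ i ∈ S, (C (x i) + C ((1:ℝ)) * X))
      = ∑ j ∈ S, ∏ i ∈ S.erase j, (C (x i) + C ((1:ℝ)) * X) := by
    intro S _
    rw [derivative_finset_prod]
    refine Finset.sum_congr rfl fun j _ => ?_
    simp
  rw [Finset.sum_congr rfl h1,
    sum_powersetCard_erase k hk (fun T => ∏ i ∈ T, (C (x i) + C (1:ℝ) * X)),
    symPoly, Finset.smul_sum]

end RealRooted

section Roots
variable {n : ℕ}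

lemma sig_one (k : ℕ) : sig n k (fun _ => (1:ℝ)) = (n.choose k : ℝ) := by
  simp [sig, Finset.card_powersetCard]

lemma natDegree_symPoly_one (x : Fin n → ℝ) (k : ℕ) (hk : k ≤ n) :
    (symPoly n k x (fun _ => (1:ℝ))).natDegree = k := by
  refine natDegree_symPoly n k x _ ?_
  rw [sig_one]
  exact Nat.cast_ne_zero.2 (Nat.choose_pos hk).ne'

lemma symPoly_self (x : Fin n → ℝ) :
    symPoly n n x (fun _ => (1:ℝ))
      = (Multiset.map (fun a => X - C a) ((univ : Finset (Fin n)).val.map (fun i => -x i))).prod := by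
  have h : (univ : Finset (Fin n)).card = n := by simp
  have hp : powersetCard n (univ : Finset (Fin n)) = {univ} := by
    simpa [h] using Finset.powersetCard_self (univ : Finset (Fin n))
  rw [symPoly, hp, Finset.sum_singleton]
  rw [Multiset.map_map]
  have : ∀ i ∈ (univ : Finset (Fin n)), (C (x i) + C (1:ℝ) * X) = X - C (-(x i)) := by
    intro i _
    simp [sub_neg_eq_add, add_comm]
  rw [Finset.prod_congr rfl this, Finset.prod_eq_multiset_prod]
  rfl

lemma card_roots_symPoly_one (x : Fin n → ℝ) :
    ∀ d k, k + d = n → ((symPoly n k x (fun _ => (1:ℝ))).roots.card = k) := by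
  intro d
  induction d with
  | zero =>
    intro k hk
    simp only [Nat.add_zero] at hk
    subst hk
    rw [symPoly_self, roots_multiset_prod_X_sub_C]
    simp
  | succ d IH =>
    intro k hk
    have hIH := IH (k+1) (by omega)
    have hd := derivative_symPoly_one x (k+1) (by omega)
    simp only [Nat.add_sub_cancel] at hd
    have h1 := Polynomial.card_roots_le_derivative (symPoly n (k+1) x (fun _ => (1:ℝ)))
    rw [hIH, hd] at h1
    have hnz : ((n - k : ℕ) : ℝ) ≠ 0 := by
      have : 0 < n - k := by omega
      exact_mod_cast this.ne'
    have hroots : ((n - k) • symPoly n k x (fun _ => (1:ℝ))).roots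
        = (symPoly n k x (fun _ => (1:ℝ))).roots := by
      rw [nsmul_eq_mul, ← Polynomial.C_eq_natCast, roots_C_mul _ hnz]
    rw [hroots] at h1
    have h2 := Polynomial.card_roots' (symPoly n k x (fun _ => (1:ℝ)))
    rw [natDegree_symPoly_one x k (by omega)] at h2
    omega

lemma splits_symPoly_one (x : Fin n → ℝ) (k : ℕ) (hk : k ≤ n) :
    Splits (symPoly n k x (fun _ => (1:ℝ))) := by
  rw [splits_iff_card_roots, card_roots_symPoly_one x (n - k) k (by omega),
    natDegree_symPoly_one x k hk]

lemma evalC_symPoly (k : ℕ) (w v : Fin n → ℝ) (z : ℂ) :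
    ((symPoly n k w v).map (algebraMap ℝ ℂ)).eval z
      = sig n k (fun i => (w i : ℂ) + z * (v i : ℂ)) := by
  rw [map_symPoly, eval_symPoly]
  simp [Function.comp]

/-- factorization of the complex evaluation of a split real polynomial -/
lemma evalC_of_splits (p : ℝ[X]) (hs : Splits p) (z : ℂ) :
    (p.map (algebraMap ℝ ℂ)).eval z
      = (p.leadingCoeff : ℂ) * (p.roots.map (fun r : ℝ => z - (r : ℂ))).prod := by
  conv_lhs => rw [hs.eq_prod_roots]
  rw [Polynomial.map_mul, map_C, Polynomial.map_multiset_prod, Multiset.map_map,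
    eval_mul, eval_C, eval_multiset_prod, Multiset.map_map]
  congr 2
  refine Multiset.map_congr rfl fun r _ => ?_
  simp [Complex.coe_algebraMap]

lemma H1C (x : Fin n → ℝ) (k : ℕ) (hk : k ≤ n) (z : ℂ) (hz : z.im ≠ 0) :
    sig n k (fun i => (x i : ℂ) + z) ≠ 0 := by
  have h := evalC_of_splits _ (splits_symPoly_one x k hk) z
  rw [evalC_symPoly] at h
  have hchoose : (sig n k (fun _ => (1:ℝ)) : ℝ) ≠ 0 := by
    rw [sig_one]; exact Nat.cast_ne_zero.2 (Nat.choose_pos hk).ne'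
  have hlc : (symPoly n k x (fun _ => (1:ℝ))).leadingCoeff ≠ 0 := by
    rw [leadingCoeff_symPoly _ _ _ _ hchoose]; exact hchoose
  have hform : sig n k (fun i => (x i : ℂ) + z * ((1:ℝ) : ℂ))
      = sig n k (fun i => (x i : ℂ) + z) := by
    congr 1; funext i; simp
  rw [hform] at h
  rw [h]
  refine mul_ne_zero (by exact_mod_cast hlc) (Multiset.prod_ne_zero ?_)
  intro hmem
  rw [Multiset.mem_map] at hmem
  obtain ⟨r, _, hr⟩ := hmem
  have : z = (r : ℂ) := by linear_combination hr
  rw [this] at hz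
  simp at hz

end Roots

section Bounds

lemma multiset_prod_abs_ge (s : Multiset ℂ) (z : ℂ) (c : ℝ) (hc : 0 ≤ c)
    (h : ∀ r ∈ s, c ≤ ‖z - r‖) :
    c ^ Multiset.card s ≤ ‖(s.map (fun r => z - r)).prod‖ := by
  induction s using Multiset.induction_on with
  | empty => simp
  | cons a s IH =>
    rw [Multiset.map_cons, Multiset.prod_cons, norm_mul, Multiset.card_cons, pow_succ']
    exact mul_le_mul (h a (Multiset.mem_cons_self a s))
      (IH fun r hr => h r (Multiset.mem_cons_of_mem hr))
      (pow_nonneg hc _) (norm_nonneg _)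

lemma abs_eval_ge_of_roots (q : Polynomial ℂ) (z : ℂ) (c : ℝ) (hc : 0 ≤ c)
    (h : ∀ r ∈ q.roots, c ≤ ‖z - r‖) :
    ‖q.leadingCoeff‖ * c ^ q.natDegree ≤ ‖q.eval z‖ := by
  by_cases hq : q = 0
  · simp [hq]
  have hsp := IsAlgClosed.splits (k := ℂ) q
  have hcard : Multiset.card q.roots = q.natDegree := splits_iff_card_roots.1 hsp
  conv_rhs => rw [hsp.eq_prod_roots]
  rw [eval_mul, eval_C, norm_mul, eval_multiset_prod, Multiset.map_map, ← hcard]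
  have hmap : Multiset.map (eval z ∘ fun a => X - C a) q.roots
      = Multiset.map (fun r => z - r) q.roots :=
    Multiset.map_congr rfl fun r _ => by simp
  rw [hmap]
  exact mul_le_mul_of_nonneg_left (multiset_prod_abs_ge _ _ _ hc h) (norm_nonneg _)

lemma cauchy_root_bound (q : Polynomial ℂ) (z : ℂ) (hz : q.eval z = 0) (hq : q ≠ 0) :
    ‖z‖ ≤ 1 + (∑ j ∈ Finset.range q.natDegree, ‖q.coeff j‖)
      / ‖q.leadingCoeff‖ := by
  have hlc : 0 < ‖q.leadingCoeff‖ := by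
    simpa [norm_pos_iff] using leadingCoeff_ne_zero.2 hq
  have hS : 0 ≤ (∑ j ∈ Finset.range q.natDegree, ‖q.coeff j‖)
      / ‖q.leadingCoeff‖ :=
    div_nonneg (Finset.sum_nonneg fun _ _ => norm_nonneg _) hlc.le
  rcases Nat.eq_zero_or_pos q.natDegree with h0 | hpos
  · exfalso
    rw [Polynomial.eq_C_of_natDegree_eq_zero h0] at hz hq
    simp only [eval_C] at hz
    exact hq (by rw [hz, map_zero])
  by_cases habs : ‖z‖ ≤ 1
  · linarith
  push_neg at habs
  set k := q.natDegree with hk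
  have heval := Polynomial.eval_eq_sum_range (p := q) z
  rw [Finset.sum_range_succ, hz] at heval
  have hmain : q.coeff k * z ^ k = -(∑ i ∈ Finset.range k, q.coeff i * z ^ i) := by
    linear_combination -heval
  have h1 : ‖q.leadingCoeff‖ * ‖z‖ ^ k
      ≤ ∑ i ∈ Finset.range k, ‖q.coeff i‖ * ‖z‖ ^ i := by
    calc ‖q.leadingCoeff‖ * ‖z‖ ^ k
        = ‖q.coeff k * z ^ k‖ := by
          rw [norm_mul, norm_pow]; rfl
      _ = ‖∑ i ∈ Finset.range k, q.coeff i * z ^ i‖ := by rw [hmain, norm_neg]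
      _ ≤ ∑ i ∈ Finset.range k, ‖q.coeff i * z ^ i‖ :=
          norm_sum_le _ _
      _ = ∑ i ∈ Finset.range k, ‖q.coeff i‖ * ‖z‖ ^ i := by
          refine Finset.sum_congr rfl fun i _ => ?_
          rw [norm_mul, norm_pow]
  have h2 : ∀ i ∈ Finset.range k, ‖q.coeff i‖ * ‖z‖ ^ i
      ≤ ‖q.coeff i‖ * ‖z‖ ^ (k-1) := by
    intro i hi
    refine mul_le_mul_of_nonneg_left ?_ (norm_nonneg _)
    have hik := Finset.mem_range.1 hi
    exact pow_le_pow_right₀ habs.le (by omega)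
  have h3 : ‖q.leadingCoeff‖ * ‖z‖ ^ k
      ≤ (∑ i ∈ Finset.range k, ‖q.coeff i‖) * ‖z‖ ^ (k-1) := by
    refine h1.trans ?_
    rw [Finset.sum_mul]
    exact Finset.sum_le_sum h2
  have hzpow : (0:ℝ) < ‖z‖ ^ (k-1) := pow_pos (lt_trans one_pos habs) _
  have h4 : ‖q.leadingCoeff‖ * ‖z‖
      ≤ ∑ i ∈ Finset.range k, ‖q.coeff i‖ := by
    have hksplit : ‖z‖ ^ k = ‖z‖ ^ (k-1) * ‖z‖ := by
      conv_lhs => rw [show k = (k-1)+1 by omega]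
      rw [pow_succ]
    rw [hksplit] at h3
    have h3' : (‖q.leadingCoeff‖ * ‖z‖) * ‖z‖ ^ (k-1)
        ≤ (∑ i ∈ Finset.range k, ‖q.coeff i‖) * ‖z‖ ^ (k-1) := by
      ring_nf
      ring_nf at h3
      linarith
    exact le_of_mul_le_mul_right h3' hzpow
  have h5 : ‖z‖ ≤ (∑ i ∈ Finset.range k, ‖q.coeff i‖)
      / ‖q.leadingCoeff‖ := by
    rw [le_div_iff₀ hlc]
    linarith [h4]
  linarith

end Bounds

section GammaBasic
variable {n : ℕ}

lemma sig_zero (x : Fin n → ℝ) : sig n 0 x = 1 := by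
  simp [sig]

lemma sig_smul (k : ℕ) (c : ℝ) (x : Fin n → ℝ) :
    sig n k (fun i => c * x i) = c ^ k * sig n k x := by
  rw [sig, sig, Finset.mul_sum]
  refine Finset.sum_congr rfl fun s hs => ?_
  rw [Finset.prod_mul_distrib, Finset.prod_const, (Finset.mem_powersetCard.1 hs).2]

lemma continuous_sig {α : Type*} [TopologicalSpace α] {R : Type*} [CommRing R]
    [TopologicalSpace R] [IsTopologicalRing R] (k : ℕ) (u : α → Fin n → R)
    (hu : ∀ i, Continuous fun t => u t i) : Continuous fun t => sig n k (u t) := by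
  unfold sig
  exact continuous_finset_sum _ fun s _ => continuous_finset_prod _ fun i _ => hu i

lemma coeff_symPoly_one_nonneg (x : Fin n → ℝ) (k : ℕ)
    (hx : ∀ j, j ≤ k → 0 ≤ sig n j x) :
    ∀ m, 0 ≤ (symPoly n k x (fun _ => (1:ℝ))).coeff m := by
  induction k with
  | zero =>
    intro m
    have h1 : symPoly n 0 x (fun _ => (1:ℝ)) = 1 := by
      simp [symPoly]
    rw [h1, Polynomial.coeff_one]
    split <;> norm_num
  | succ k IH =>
    intro m
    cases m with
    | zero =>
      rw [Polynomial.coeff_zero_eq_eval_zero, eval_symPoly]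
      simpa using hx (k+1) le_rfl
    | succ m =>
      have hd := derivative_symPoly_one x (k+1) (by omega)
      simp only [Nat.add_sub_cancel] at hd
      have h1 : (derivative (symPoly n (k+1) x (fun _ => (1:ℝ)))).coeff m
          = (symPoly n (k+1) x (fun _ => (1:ℝ))).coeff (m+1) * (m+1) :=
        Polynomial.coeff_derivative _ _
      rw [hd] at h1
      have h2 : 0 ≤ ((n-k) • symPoly n k x (fun _ => (1:ℝ))).coeff m := by
        rw [Polynomial.coeff_smul]
        have := IH (fun j hj => hx j (by omega)) m
        positivity
      rw [h1] at h2
      by_contra hneg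
      push_neg at hneg
      have : (symPoly n (k+1) x (fun _ => (1:ℝ))).coeff (m+1) * ((m:ℝ)+1) < 0 := by
        have hm1 : (0:ℝ) < (m:ℝ)+1 := by positivity
        exact mul_neg_of_neg_of_pos hneg hm1
      linarith

lemma coeff_zero_symPoly_one (x : Fin n → ℝ) (k : ℕ) :
    (symPoly n k x (fun _ => (1:ℝ))).coeff 0 = sig n k x := by
  rw [Polynomial.coeff_zero_eq_eval_zero, eval_symPoly]
  simp

lemma eval_ge_coeff_zero (p : Polynomial ℝ) (hc : ∀ m, 0 ≤ p.coeff m) (t : ℝ) (ht : 0 ≤ t) :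
    p.coeff 0 ≤ p.eval t := by
  rw [Polynomial.eval_eq_sum_range, Finset.sum_range_succ']
  simp only [pow_zero, mul_one]
  have : 0 ≤ ∑ i ∈ Finset.range p.natDegree, p.coeff (i+1) * t ^ (i+1) :=
    Finset.sum_nonneg fun i _ => mul_nonneg (hc _) (pow_nonneg ht _)
  linarith

/-- star-shape: Γ is closed under adding nonnegative multiples of (1,…,1) -/
lemma inGamma_shift (k : ℕ) (a : Fin n → ℝ) (ha : inGamma n k a) (t : ℝ) (ht : 0 ≤ t) :
    inGamma n k (fun i => a i + t) := by
  intro j hj1 hjk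
  have hx : ∀ i, i ≤ j → 0 ≤ sig n i a := by
    intro i hij
    rcases Nat.eq_zero_or_pos i with h0 | hpos
    · subst h0; rw [sig_zero]; norm_num
    · exact (ha i hpos (le_trans hij hjk)).le
  have h1 := eval_ge_coeff_zero _ (coeff_symPoly_one_nonneg a j hx) t ht
  rw [coeff_zero_symPoly_one, eval_symPoly] at h1
  have h2 : 0 < sig n j a := ha j hj1 hjk
  rw [esymm_eq_sig]
  calc (0:ℝ) < sig n j a := h2
    _ ≤ sig n j (fun i => a i + t * 1) := h1
    _ = sig n j (fun i => a i + t) := by norm_num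

lemma one_inGamma (k : ℕ) (hkn : k ≤ n) : inGamma n k (fun _ => (1:ℝ)) := by
  intro j hj1 hjk
  rw [esymm_eq_sig, sig_one]
  exact_mod_cast Nat.choose_pos (le_trans hjk hkn)

/-- points on the segment from (1,…,1) to a point of Γ stay in Γ -/
lemma inGamma_path (k : ℕ) (hkn : k ≤ n) (a : Fin n → ℝ) (ha : inGamma n k a)
    (θ : ℝ) (h0 : 0 ≤ θ) (h1 : θ ≤ 1) :
    inGamma n k (fun i => (1-θ) + θ * a i) := by
  rcases eq_or_lt_of_le h0 with h | h
  · have : (fun i => (1-θ) + θ * a i) = (fun _ => (1:ℝ)) := by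
      funext i; rw [← h]; ring
    rw [this]; exact one_inGamma k hkn
  · have hform : (fun i => (1-θ) + θ * a i) = (fun i => θ * ((a i + (1-θ)/θ))) := by
      funext i; field_simp; ring
    intro j hj1 hjk
    rw [hform, esymm_eq_sig, sig_smul]
    have := inGamma_shift k a ha ((1-θ)/θ) (div_nonneg (by linarith) h.le) j hj1 hjk
    rw [esymm_eq_sig] at this
    have hθ : (0:ℝ) < θ ^ j := by positivity
    exact mul_pos hθ this

end GammaBasic

section H2helpers
variable {n : ℕ}

lemma sig_ofReal (k : ℕ) (u : Fin n → ℝ) :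
    sig n k (fun i => ((u i : ℝ) : ℂ)) = ((sig n k u : ℝ) : ℂ) := by
  rw [sig, sig]
  push_cast
  rfl

lemma continuous_coeff_symPoly {α : Type*} [TopologicalSpace α] {R : Type*} [CommRing R]
    [TopologicalSpace R] [IsTopologicalRing R] (k m : ℕ)
    (w v : α → Fin n → R) (hw : ∀ i, Continuous fun t => w t i)
    (hv : ∀ i, Continuous fun t => v t i) :
    Continuous fun t => (symPoly n k (w t) (v t)).coeff m := by
  simp only [coeff_symPoly]
  refine continuous_finset_sum _ fun s _ => continuous_finset_sum _ fun u _ => ?_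
  by_cases h : u.card = m
  · simp only [h, if_true]
    exact (continuous_finset_prod _ fun i _ => hv i).mul
      (continuous_finset_prod _ fun i _ => hw i)
  · simp only [h, if_false]
    exact continuous_const

lemma abs_sub_ge_im (z r : ℂ) (hr : r.im ≤ 0) : z.im ≤ ‖z - r‖ := by
  have h1 : z.im ≤ (z - r).im := by simp [Complex.sub_im]; linarith
  exact h1.trans ((le_abs_self _).trans (Complex.abs_im_le_norm _))

lemma abs_sub_ge_re (s : ℝ) (r : ℂ) (hr : r.re ≤ 0) (hs : 0 ≤ s) :
    s ≤ ‖(s : ℂ) - r‖ := by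
  have h1 : s ≤ ((s:ℂ) - r).re := by simp [Complex.sub_re]; linarith
  exact h1.trans ((le_abs_self _).trans (Complex.abs_re_le_norm _))

end H2helpers

section H2
variable {n : ℕ}

lemma H2aux (k : ℕ) (hk1 : 1 ≤ k) (hkn : k ≤ n) (a : Fin n → ℝ) (ha : inGamma n k a)
    (x : Fin n → ℝ) (ε : ℝ) (hε : 0 < ε) :
    ∀ z : ℂ, 0 ≤ z.im →
      sig n k (fun i => (x i : ℂ) + Complex.I * ε + z * (a i : ℂ)) ≠ 0 := by
  set A : ℝ → Fin n → ℝ := fun θ i => (1-θ) + θ * a i with hA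
  set q : ℝ → Polynomial ℂ := fun θ =>
    symPoly n k (fun i => (x i : ℂ) + Complex.I * ε) (fun i => ((A θ i : ℝ) : ℂ)) with hq
  have heval : ∀ θ z, (q θ).eval z
      = sig n k (fun i => (x i:ℂ) + Complex.I*ε + z * ((A θ i : ℝ):ℂ)) := by
    intro θ z; simp only [hq]; exact eval_symPoly n k _ _ z
  have hApos : ∀ θ, θ ∈ Set.Icc (0:ℝ) 1 → 0 < sig n k (A θ) := by
    intro θ hθ
    have := inGamma_path k hkn a ha θ hθ.1 hθ.2 k hk1 le_rfl
    rwa [esymm_eq_sig] at this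
  have hAcont : ∀ i, Continuous fun θ => A θ i := by
    intro i
    simp only [hA]
    fun_prop
  have hvCont : ∀ i, Continuous fun θ => ((A θ i : ℝ) : ℂ) :=
    fun i => Complex.continuous_ofReal.comp (hAcont i)
  have hsigACont : Continuous fun θ => sig n k (A θ) := continuous_sig k A hAcont
  obtain ⟨θ₀, hθ₀, hmin⟩ := isCompact_Icc.exists_isMinOn (Set.nonempty_Icc.2 zero_le_one)
    hsigACont.continuousOn
  set c := sig n k (A θ₀) with hc
  have hcpos : 0 < c := hApos θ₀ hθ₀
  have hcle : ∀ θ ∈ Set.Icc (0:ℝ) 1, c ≤ sig n k (A θ) := hmin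
  have hdeg : ∀ θ ∈ Set.Icc (0:ℝ) 1, (q θ).natDegree = k := by
    intro θ hθ
    simp only [hq]
    refine natDegree_symPoly n k _ _ ?_
    rw [sig_ofReal]
    exact_mod_cast (hApos θ hθ).ne'
  have hlc : ∀ θ ∈ Set.Icc (0:ℝ) 1, (q θ).leadingCoeff = ((sig n k (A θ) : ℝ) : ℂ) := by
    intro θ hθ
    simp only [hq]
    rw [leadingCoeff_symPoly n k _ _ (by rw [sig_ofReal]; exact_mod_cast (hApos θ hθ).ne'),
      sig_ofReal]
  have hcoeffCont : ∀ j, Continuous fun θ => ‖(q θ).coeff j‖ := by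
    intro j
    simp only [hq]
    exact continuous_norm.comp
      (continuous_coeff_symPoly k j _ _ (fun i => continuous_const) hvCont)
  obtain ⟨θM, hθM, hM⟩ := isCompact_Icc.exists_isMaxOn (Set.nonempty_Icc.2 zero_le_one)
    ((continuous_finset_sum _ fun j _ => hcoeffCont j).continuousOn
      (s := Set.Icc (0:ℝ) 1))
  set M := ∑ j ∈ Finset.range k, ‖(q θM).coeff j‖ with hMdef
  have hMle : ∀ θ ∈ Set.Icc (0:ℝ) 1,
      (∑ j ∈ Finset.range k, ‖(q θ).coeff j‖) ≤ M := hM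
  have hM0 : 0 ≤ M := by
    rw [hMdef]
    exact Finset.sum_nonneg fun _ _ => norm_nonneg _
  have hbdry : ∀ θ, ∀ z : ℂ, z.im = 0 → (q θ).eval z ≠ 0 := by
    intro θ z hzim
    obtain ⟨t, rfl⟩ : ∃ t : ℝ, z = (t:ℂ) := ⟨z.re, Complex.ext rfl (by simp [hzim])⟩
    rw [heval]
    have hform : (fun i => (x i:ℂ) + Complex.I*ε + (t:ℂ) * ((A θ i : ℝ):ℂ))
        = fun i => ((x i + t * A θ i : ℝ) : ℂ) + Complex.I * ε := by
      funext i; push_cast; ring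
    rw [hform]
    refine H1C (fun i => x i + t * A θ i) k hkn (Complex.I * ε) ?_
    simp [Complex.mul_im, hε.ne']
  have hUbound : ∀ θ ∈ Set.Icc (0:ℝ) 1,
      (∀ z : ℂ, 0 ≤ z.im → (q θ).eval z ≠ 0) →
      ∀ z : ℂ, 0 ≤ z.im → c * z.im ^ k ≤ ‖(q θ).eval z‖ := by
    intro θ hθ hU z hz
    have hroots : ∀ r ∈ (q θ).roots, z.im ≤ ‖z - r‖ := by
      intro r hr
      have hq0 : q θ ≠ 0 := by
        intro h0
        have h1 := hlc θ hθ
        rw [h0] at h1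
        simp only [leadingCoeff_zero] at h1
        exact (hApos θ hθ).ne' (by exact_mod_cast h1.symm)
      have hrroot : (q θ).eval r = 0 := (Polynomial.mem_roots hq0).1 hr
      have him : r.im < 0 := by
        by_contra hcon
        push_neg at hcon
        exact hU r hcon hrroot
      exact abs_sub_ge_im z r him.le
    have hge := abs_eval_ge_of_roots (q θ) z z.im hz hroots
    rw [hdeg θ hθ, hlc θ hθ] at hge
    have habs : ‖((sig n k (A θ) : ℝ) : ℂ)‖ = sig n k (A θ) := by
      rw [Complex.norm_real, Real.norm_eq_abs, abs_of_pos (hApos θ hθ)]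
    rw [habs] at hge
    refine le_trans ?_ hge
    exact mul_le_mul_of_nonneg_right (hcle θ hθ) (pow_nonneg hz k)
  set U : Set ℝ := {θ | θ ∈ Set.Icc (0:ℝ) 1 ∧ ∀ z : ℂ, 0 ≤ z.im → (q θ).eval z ≠ 0} with hUdef
  set V : Set ℝ := {θ | θ ∈ Set.Icc (0:ℝ) 1 ∧ ∃ z : ℂ, 0 ≤ z.im ∧ (q θ).eval z = 0} with hVdef
  have hevalCont : ∀ z : ℂ, Continuous fun θ => (q θ).eval z := by
    intro z
    simp only [heval]
    refine continuous_sig k _ (fun i => ?_)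
    exact continuous_const.add (continuous_const.mul (hvCont i))
  have hUclosed : IsClosed U := by
    refine IsSeqClosed.isClosed ?_
    intro u p hu hup
    have hpIcc : p ∈ Set.Icc (0:ℝ) 1 :=
      isClosed_Icc.mem_of_tendsto hup (Filter.Eventually.of_forall fun m => (hu m).1)
    refine ⟨hpIcc, ?_⟩
    intro z hz
    rcases eq_or_lt_of_le hz with hz0 | hzpos
    · exact hbdry p z hz0.symm
    · have hev : Filter.Tendsto (fun m => ‖(q (u m)).eval z‖) Filter.atTop
          (nhds (‖(q p).eval z‖)) :=
        (continuous_norm.tendsto _).comp (((hevalCont z).tendsto p).comp hup)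
      have hlb : ∀ m, c * z.im ^ k ≤ ‖(q (u m)).eval z‖ :=
        fun m => hUbound (u m) (hu m).1 (hu m).2 z hz
      have hfin := ge_of_tendsto hev (Filter.Eventually.of_forall hlb)
      intro h0
      rw [h0] at hfin
      simp only [norm_zero] at hfin
      nlinarith [pow_pos hzpos k]
  have hVclosed : IsClosed V := by
    refine IsSeqClosed.isClosed ?_
    intro u p hu hup
    have hpIcc : p ∈ Set.Icc (0:ℝ) 1 :=
      isClosed_Icc.mem_of_tendsto hup (Filter.Eventually.of_forall fun m => (hu m).1)
    choose zf hzim hzroot using fun m => (hu m).2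
    set R := 1 + M / c with hR
    have hbound : ∀ m, ‖zf m‖ ≤ R := by
      intro m
      have hqne : q (u m) ≠ 0 := by
        intro h0
        have h1 := hlc (u m) (hu m).1
        rw [h0] at h1
        simp only [leadingCoeff_zero] at h1
        exact (hApos (u m) (hu m).1).ne' (by exact_mod_cast h1.symm)
      have hb := cauchy_root_bound (q (u m)) (zf m) (hzroot m) hqne
      rw [hdeg (u m) (hu m).1, hlc (u m) (hu m).1] at hb
      refine hb.trans ?_
      rw [hR]
      have habs : ‖((sig n k (A (u m)) : ℝ) : ℂ)‖ = sig n k (A (u m)) := by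
        rw [Complex.norm_real, Real.norm_eq_abs, abs_of_pos (hApos (u m) (hu m).1)]
      rw [habs]
      have hdivle : (∑ j ∈ Finset.range k, ‖(q (u m)).coeff j‖) / sig n k (A (u m))
          ≤ M / c :=
        div_le_div₀ hM0 (hMle (u m) (hu m).1) hcpos (hcle (u m) (hu m).1)
      linarith
    obtain ⟨zs, _, φ, hφmono, hφtend⟩ :=
      (isCompact_closedBall (0:ℂ) R).tendsto_subseq (x := zf) (fun m => by
        simpa [Metric.mem_closedBall, Complex.dist_eq] using hbound m)
    refine ⟨hpIcc, zs, ?_, ?_⟩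
    · have him : Filter.Tendsto (fun m => (zf (φ m)).im) Filter.atTop (nhds zs.im) :=
        (Complex.continuous_im.tendsto _).comp hφtend
      exact ge_of_tendsto him (Filter.Eventually.of_forall fun m => hzim (φ m))
    · have hg : Continuous fun pr : ℝ × ℂ => (q pr.1).eval pr.2 := by
        simp only [heval]
        refine continuous_sig k _ (fun i => ?_)
        exact continuous_const.add (continuous_snd.mul
          ((hvCont i).comp continuous_fst))
      have htend : Filter.Tendsto (fun m => ((u (φ m)), zf (φ m))) Filter.atTop
          (nhds (p, zs)) :=
        ((hup.comp hφmono.tendsto_atTop).prodMk_nhds hφtend)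
      have hlim := (hg.tendsto (p, zs)).comp htend
      have heq : (fun m => (q (u (φ m))).eval (zf (φ m))) = fun _ => (0:ℂ) := by
        funext m; exact hzroot (φ m)
      rw [show (fun m => (q (u (φ m))).eval (zf (φ m))) = ((fun pr : ℝ × ℂ => (q pr.1).eval pr.2) ∘ fun m => ((u (φ m)), zf (φ m))) from rfl] at heq
      rw [heq] at hlim
      exact (tendsto_nhds_unique hlim tendsto_const_nhds).symm ▸ rfl
  have h0U : (0:ℝ) ∈ U := by
    refine ⟨Set.left_mem_Icc.2 zero_le_one, ?_⟩
    intro z hz h0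
    rw [heval] at h0
    have hform : (fun i => (x i:ℂ) + Complex.I*ε + z * ((A 0 i : ℝ):ℂ))
        = fun i => (x i : ℂ) + (Complex.I * ε + z) := by
      funext i
      have : A 0 i = 1 := by simp [hA]
      rw [this]
      push_cast
      ring
    rw [hform] at h0
    refine H1C x k hkn (Complex.I*ε + z) ?_ h0
    have : (Complex.I*(ε:ℂ) + z).im = ε + z.im := by simp [Complex.add_im, Complex.mul_im]
    rw [this]
    linarith
  intro z hz hzero
  have h1V : (1:ℝ) ∈ V := by
    refine ⟨Set.right_mem_Icc.2 zero_le_one, z, hz, ?_⟩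
    rw [heval]
    have hform : (fun i => (x i:ℂ) + Complex.I*ε + z * ((A 1 i : ℝ):ℂ))
        = fun i => (x i : ℂ) + Complex.I * ε + z * (a i : ℂ) := by
      funext i
      have : A 1 i = a i := by simp [hA]
      rw [this]
    rw [hform]
    exact hzero
  have hsub : Set.Icc (0:ℝ) 1 ⊆ U ∪ V := by
    intro θ hθ
    by_cases hcase : ∀ z : ℂ, 0 ≤ z.im → (q θ).eval z ≠ 0
    · exact Or.inl ⟨hθ, hcase⟩
    · push_neg at hcase
      obtain ⟨zc, hzc1, hzc2⟩ := hcase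
      exact Or.inr ⟨hθ, zc, hzc1, hzc2⟩
  obtain ⟨θ, hθIcc, hθU, hθV⟩ := (isPreconnected_closed_iff.1 isPreconnected_Icc) U V
    hUclosed hVclosed hsub ⟨0, Set.left_mem_Icc.2 zero_le_one, h0U⟩
    ⟨1, Set.right_mem_Icc.2 zero_le_one, h1V⟩
  obtain ⟨zb, hzb1, hzb2⟩ := hθV.2
  exact hθU.2 zb hzb1 hzb2

end H2

section H2quant
variable {n : ℕ}

lemma H2 (k : ℕ) (hk1 : 1 ≤ k) (hkn : k ≤ n) (a : Fin n → ℝ) (ha : inGamma n k a)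
    (x : Fin n → ℝ) (z : ℂ) (hz : 0 < z.im) :
    sig n k a * z.im ^ k ≤ ‖sig n k (fun i => (x i : ℂ) + z * (a i : ℂ))‖ := by
  have hsiga : 0 < sig n k a := by
    have := ha k hk1 le_rfl
    rwa [esymm_eq_sig] at this
  have hεbound : ∀ ε : ℝ, 0 < ε →
      sig n k a * z.im ^ k
        ≤ ‖sig n k (fun i => (x i:ℂ) + Complex.I*ε + z * ((a i :ℝ):ℂ))‖ := by
    intro ε hε
    set qp : Polynomial ℂ :=
      symPoly n k (fun i => (x i : ℂ) + Complex.I * ε) (fun i => ((a i : ℝ):ℂ)) with hqp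
    have heval : ∀ w : ℂ, qp.eval w
        = sig n k (fun i => (x i:ℂ) + Complex.I*ε + w * ((a i : ℝ):ℂ)) :=
      fun w => eval_symPoly n k _ _ w
    have hvne : sig n k (fun i => ((a i : ℝ):ℂ)) ≠ 0 := by
      rw [sig_ofReal]; exact_mod_cast hsiga.ne'
    have hdeg : qp.natDegree = k := natDegree_symPoly n k _ _ hvne
    have hlc : qp.leadingCoeff = ((sig n k a : ℝ):ℂ) := by
      rw [hqp, leadingCoeff_symPoly n k _ _ hvne, sig_ofReal]
    have hqne : qp ≠ 0 := by
      intro h0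
      rw [h0, leadingCoeff_zero] at hlc
      exact hsiga.ne' (by exact_mod_cast hlc.symm)
    have hroots : ∀ r ∈ qp.roots, z.im ≤ ‖z - r‖ := by
      intro r hr
      have hroot0 := (Polynomial.mem_roots hqne).1 hr
      have him : r.im < 0 := by
        by_contra hcon
        push_neg at hcon
        exact H2aux k hk1 hkn a ha x ε hε r hcon (by rw [← heval]; exact hroot0)
      exact abs_sub_ge_im z r him.le
    have hge := abs_eval_ge_of_roots qp z z.im hz.le hroots
    rw [hdeg, hlc, Complex.norm_real, Real.norm_eq_abs, abs_of_pos hsiga, heval] at hge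
    exact hge
  have hcont : Continuous fun ε : ℝ =>
      ‖sig n k (fun i => (x i:ℂ) + Complex.I*ε + z * ((a i:ℝ):ℂ))‖ := by
    refine continuous_norm.comp (continuous_sig k _ (fun i => ?_))
    have : Continuous fun ε : ℝ => ((ε : ℝ) : ℂ) := Complex.continuous_ofReal
    fun_prop
  have htends : Filter.Tendsto
      (fun ε : ℝ => ‖sig n k (fun i => (x i:ℂ) + Complex.I*ε + z * ((a i:ℝ):ℂ))‖)
      (nhdsWithin 0 (Set.Ioi 0))
      (nhds (‖sig n k (fun i => (x i:ℂ) + Complex.I*((0:ℝ):ℂ) + z * ((a i:ℝ):ℂ))‖)) :=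
    (hcont.tendsto 0).mono_left nhdsWithin_le_nhds
  have hfin := ge_of_tendsto htends
    (eventually_mem_nhdsWithin.mono (fun ε hε => hεbound ε hε))
  have hform : (fun i => (x i:ℂ) + Complex.I*((0:ℝ):ℂ) + z * ((a i:ℝ):ℂ))
      = fun i => (x i : ℂ) + z * (a i : ℂ) := by
    funext i; simp
  rwa [hform] at hfin

end H2quant

section H3
variable {n : ℕ}

lemma sig_star (k : ℕ) (u : Fin n → ℂ) :
    (starRingEnd ℂ) (sig n k u) = sig n k (fun i => (starRingEnd ℂ) (u i)) := by
  rw [sig, sig, map_sum]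
  exact Finset.sum_congr rfl fun s _ => by rw [map_prod]

lemma eval_pos_of_large (p : Polynomial ℝ) (k : ℕ) (hdeg : p.natDegree = k) (hk : 1 ≤ k)
    (hlc : 0 < p.leadingCoeff) (s : ℝ) (hs : 1 ≤ s)
    (hs2 : (∑ j ∈ Finset.range k, |p.coeff j|) / p.leadingCoeff < s) : 0 < p.eval s := by
  have hspos : 0 < s := lt_of_lt_of_le one_pos hs
  rw [Polynomial.eval_eq_sum_range, hdeg, Finset.sum_range_succ]
  have hck : p.coeff k = p.leadingCoeff := by rw [Polynomial.leadingCoeff, hdeg]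
  have h1 : |∑ j ∈ Finset.range k, p.coeff j * s ^ j|
      ≤ (∑ j ∈ Finset.range k, |p.coeff j|) * s ^ (k-1) := by
    refine (Finset.abs_sum_le_sum_abs _ _).trans ?_
    rw [Finset.sum_mul]
    refine Finset.sum_le_sum fun j hj => ?_
    rw [abs_mul, abs_pow, abs_of_pos hspos]
    refine mul_le_mul_of_nonneg_left ?_ (abs_nonneg _)
    exact pow_le_pow_right₀ hs (by have := Finset.mem_range.1 hj; omega)
  have h2 : (∑ j ∈ Finset.range k, |p.coeff j|) * s ^ (k-1)
      < p.leadingCoeff * s ^ k := by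
    have hkk : s ^ k = s * s ^ (k-1) := by
      conv_lhs => rw [show k = (k-1)+1 by omega]
      rw [pow_succ]; ring
    rw [hkk]
    have hS : (∑ j ∈ Finset.range k, |p.coeff j|) < p.leadingCoeff * s := by
      rw [div_lt_iff₀ hlc] at hs2
      linarith [hs2]
    have hpow : (0:ℝ) < s ^ (k-1) := pow_pos hspos _
    calc (∑ j ∈ Finset.range k, |p.coeff j|) * s ^ (k-1)
        < (p.leadingCoeff * s) * s ^ (k-1) := by
          exact mul_lt_mul_of_pos_right hS hpow
      _ = p.leadingCoeff * (s * s ^ (k-1)) := by ring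
  have h3 : -((∑ j ∈ Finset.range k, |p.coeff j|) * s ^ (k-1))
      ≤ ∑ j ∈ Finset.range k, p.coeff j * s ^ j := by
    have := abs_le.1 (le_of_eq (rfl : |∑ j ∈ Finset.range k, p.coeff j * s ^ j| = _)) 
    have h4 := neg_abs_le (∑ j ∈ Finset.range k, p.coeff j * s ^ j)
    linarith [h1]
  rw [hck]
  linarith

end H3

section H3main
variable {n : ℕ}

lemma sig_one_add_pos (k : ℕ) (hk1 : 1 ≤ k) (hkn : k ≤ n) (a : Fin n → ℝ)
    (ha : inGamma n k a) (s : ℝ) (hs : 0 ≤ s) :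
    0 < sig n k (fun i => 1 + s * a i) := by
  rcases eq_or_lt_of_le hs with h0 | hpos
  · have hform : (fun i => 1 + s * a i) = fun _ : Fin n => (1:ℝ) := by
      funext i; rw [← h0]; ring
    rw [hform, sig_one]
    exact_mod_cast Nat.choose_pos hkn
  · have hform : (fun i => 1 + s * a i) = fun i => s * (a i + 1/s) := by
      funext i; field_simp; ring
    rw [hform, sig_smul]
    have hsh := inGamma_shift k a ha (1/s) (by positivity) k hk1 le_rfl
    rw [esymm_eq_sig] at hsh
    exact mul_pos (pow_pos hpos k) hsh

lemma H3 (k : ℕ) (hk1 : 1 ≤ k) (hkn : k ≤ n) (a b : Fin n → ℝ)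
    (ha : inGamma n k a) (hb : inGamma n k b) :
    ∀ s : ℝ, 0 ≤ s → 0 < sig n k (fun i => b i + s * a i) := by
  have hsiga : 0 < sig n k a := by
    have := ha k hk1 le_rfl; rwa [esymm_eq_sig] at this
  set B : ℝ → Fin n → ℝ := fun φ i => (1-φ) + φ * b i with hB
  have hBΓ : ∀ φ ∈ Set.Icc (0:ℝ) 1, inGamma n k (B φ) := fun φ hφ =>
    inGamma_path k hkn b hb φ hφ.1 hφ.2
  set ψ : ℝ → Polynomial ℝ := fun φ => symPoly n k (B φ) a with hψ
  have heval : ∀ φ s, (ψ φ).eval s = sig n k (fun i => B φ i + s * a i) := by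
    intro φ s; simp only [hψ]; exact eval_symPoly n k _ _ s
  have hdeg : ∀ φ, (ψ φ).natDegree = k := fun φ => natDegree_symPoly n k _ _ hsiga.ne'
  have hlc : ∀ φ, (ψ φ).leadingCoeff = sig n k a := fun φ =>
    leadingCoeff_symPoly n k _ _ hsiga.ne'
  have hWbound : ∀ φ ∈ Set.Icc (0:ℝ) 1,
      (∀ s : ℝ, 0 ≤ s → 0 < (ψ φ).eval s) →
      ∀ s : ℝ, 0 ≤ s → sig n k a * s ^ k ≤ (ψ φ).eval s := by
    intro φ hφ hWφ s hs
    set Q : Polynomial ℂ := (ψ φ).map (algebraMap ℝ ℂ) with hQ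
    have hQeval : ∀ z : ℂ, Q.eval z
        = sig n k (fun i => ((B φ i : ℝ):ℂ) + z * ((a i:ℝ):ℂ)) := by
      intro z; simp only [hQ, hψ]; exact evalC_symPoly k _ _ z
    have hQdeg : Q.natDegree = k := by
      rw [hQ, Polynomial.natDegree_map]; exact hdeg φ
    have hcoefftop : (ψ φ).coeff k = sig n k a := by
      conv_lhs => rw [← hdeg φ]
      rw [← Polynomial.leadingCoeff, hlc φ]
    have hQlc : Q.leadingCoeff = ((sig n k a : ℝ) : ℂ) := by
      rw [Polynomial.leadingCoeff, hQdeg, hQ, Polynomial.coeff_map, hcoefftop]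
      exact congrFun Complex.coe_algebraMap _
    have hQne : Q ≠ 0 := by
      intro h0
      rw [h0, leadingCoeff_zero] at hQlc
      exact hsiga.ne' (by exact_mod_cast hQlc.symm)
    have hroots : ∀ r ∈ Q.roots, s ≤ ‖(s:ℂ) - r‖ := by
      intro r hr
      have hr0 : Q.eval r = 0 := (Polynomial.mem_roots hQne).1 hr
      have him0 : r.im = 0 := by
        rcases lt_trichotomy r.im 0 with hlt | heq | hgt
        · exfalso
          have hconj : sig n k (fun i => ((B φ i:ℝ):ℂ) + (starRingEnd ℂ) r * ((a i:ℝ):ℂ)) = 0 := by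
            rw [hQeval] at hr0
            have hc : (fun i => ((B φ i:ℝ):ℂ) + (starRingEnd ℂ) r * ((a i:ℝ):ℂ))
                = fun i => (starRingEnd ℂ) (((B φ i:ℝ):ℂ) + r * ((a i:ℝ):ℂ)) := by
              funext i
              rw [map_add, map_mul, Complex.conj_ofReal, Complex.conj_ofReal]
            rw [hc, ← sig_star, hr0, map_zero]
          have hH2 := H2 k hk1 hkn a ha (B φ) ((starRingEnd ℂ) r)
            (by simpa [Complex.conj_im] using hlt)
          rw [hconj, norm_zero] at hH2
          have hpow : (0:ℝ) < (((starRingEnd ℂ) r).im) ^ k := by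
            refine pow_pos ?_ k
            simpa [Complex.conj_im] using hlt
          nlinarith
        · exact heq
        · exfalso
          have hH2 := H2 k hk1 hkn a ha (B φ) r hgt
          rw [hQeval] at hr0
          rw [hr0, norm_zero] at hH2
          nlinarith [pow_pos hgt k]
      have hre : r.re ≤ 0 := by
        by_contra hcon
        push_neg at hcon
        obtain ⟨t, rfl⟩ : ∃ t : ℝ, r = (t:ℂ) := ⟨r.re, Complex.ext rfl (by simp [him0])⟩
        have hteval : (ψ φ).eval t = 0 := by
          have h1 : Q.eval (t:ℂ) = (((ψ φ).eval t : ℝ) : ℂ) := by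
            rw [hQeval, heval]
            have hc : (fun i => ((B φ i:ℝ):ℂ) + (t:ℂ) * ((a i:ℝ):ℂ))
                = fun i => ((B φ i + t * a i : ℝ):ℂ) := by
              funext i; push_cast; ring
            rw [hc, sig_ofReal]
          have h2 : (((ψ φ).eval t : ℝ) : ℂ) = 0 := by rw [← h1, hr0]
          exact_mod_cast h2
        have htre : (0:ℝ) < t := by exact_mod_cast hcon
        have := hWφ t htre.le
        rw [hteval] at this
        exact lt_irrefl 0 this
      exact abs_sub_ge_re s r hre hs
    have hge := abs_eval_ge_of_roots Q (s:ℂ) s hs hroots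
    rw [hQdeg, hQlc, Complex.norm_real, Real.norm_eq_abs, abs_of_pos hsiga] at hge
    have hQs : Q.eval (s:ℂ) = (((ψ φ).eval s : ℝ) : ℂ) := by
      rw [hQeval, heval]
      have : (fun i => ((B φ i:ℝ):ℂ) + (s:ℂ) * ((a i:ℝ):ℂ))
          = fun i => ((B φ i + s * a i : ℝ):ℂ) := by
        funext i; push_cast; ring
      rw [this, sig_ofReal]
    rw [hQs, Complex.norm_real, Real.norm_eq_abs, abs_of_pos (hWφ s hs)] at hge
    exact hge
  have hcoeffCont : Continuous fun φ => ∑ j ∈ Finset.range k, |(ψ φ).coeff j| := by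
    refine continuous_finset_sum _ fun j _ => ?_
    refine continuous_abs.comp ?_
    simp only [hψ]
    refine continuous_coeff_symPoly k j _ _ (fun i => ?_) (fun i => continuous_const)
    simp only [hB]
    fun_prop
  obtain ⟨φM, hφM, hMax⟩ := isCompact_Icc.exists_isMaxOn (Set.nonempty_Icc.2 zero_le_one)
    hcoeffCont.continuousOn
  set Mb := ∑ j ∈ Finset.range k, |(ψ φM).coeff j| with hMb
  set S0 : ℝ := max 1 ((Mb + 1) / sig n k a) with hS0
  have hlarge : ∀ φ ∈ Set.Icc (0:ℝ) 1, ∀ s : ℝ, S0 < s → 0 < (ψ φ).eval s := by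
    intro φ hφ s hsS
    refine eval_pos_of_large (ψ φ) k (hdeg φ) hk1 (by rw [hlc φ]; exact hsiga) s ?_ ?_
    · exact (le_max_left _ _).trans hsS.le
    · rw [hlc φ]
      have h1 : (∑ j ∈ Finset.range k, |(ψ φ).coeff j|) / sig n k a ≤ Mb / sig n k a :=
        (div_le_div_iff_of_pos_right hsiga).2 (hMax hφ)
      have h2 : Mb / sig n k a < (Mb + 1) / sig n k a :=
        (div_lt_div_iff_of_pos_right hsiga).2 (by linarith)
      have h3 : (Mb + 1) / sig n k a ≤ S0 := le_max_right _ _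
      linarith
  set W : Set ℝ := {φ | φ ∈ Set.Icc (0:ℝ) 1 ∧ ∀ s : ℝ, 0 ≤ s → 0 < (ψ φ).eval s} with hWdef
  set V : Set ℝ := {φ | φ ∈ Set.Icc (0:ℝ) 1 ∧ ∃ s : ℝ, 0 ≤ s ∧ (ψ φ).eval s ≤ 0} with hVdef
  have hevalCont2 : Continuous fun pr : ℝ × ℝ => (ψ pr.1).eval pr.2 := by
    have : ∀ pr : ℝ × ℝ, (ψ pr.1).eval pr.2 = sig n k (fun i => B pr.1 i + pr.2 * a i) :=
      fun pr => heval pr.1 pr.2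
    simp only [this]
    refine continuous_sig k _ fun i => ?_
    simp only [hB]
    fun_prop
  have hWclosed : IsClosed W := by
    refine IsSeqClosed.isClosed ?_
    intro u p hu hup
    have hpIcc : p ∈ Set.Icc (0:ℝ) 1 :=
      isClosed_Icc.mem_of_tendsto hup (Filter.Eventually.of_forall fun m => (hu m).1)
    refine ⟨hpIcc, ?_⟩
    intro s hs
    rcases eq_or_lt_of_le hs with h0 | hspos
    · rw [heval]
      have hform : (fun i => B p i + s * a i) = B p := by
        funext i; rw [← h0]; ring
      rw [hform]
      have := hBΓ p hpIcc k hk1 le_rfl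
      rwa [esymm_eq_sig] at this
    · have hgem : ∀ m, sig n k a * s ^ k ≤ (ψ (u m)).eval s :=
        fun m => hWbound (u m) (hu m).1 (hu m).2 s hs
      have hcont1 : Continuous fun φ => (ψ φ).eval s :=
        hevalCont2.comp (continuous_id.prodMk continuous_const)
      have htd : Filter.Tendsto (fun m => (ψ (u m)).eval s) Filter.atTop
          (nhds ((ψ p).eval s)) := ((hcont1.tendsto p).comp hup)
      have hge2 := ge_of_tendsto htd (Filter.Eventually.of_forall hgem)
      have hpos2 : 0 < sig n k a * s ^ k := mul_pos hsiga (pow_pos hspos k)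
      linarith
  have hVclosed : IsClosed V := by
    refine IsSeqClosed.isClosed ?_
    intro u p hu hup
    have hpIcc : p ∈ Set.Icc (0:ℝ) 1 :=
      isClosed_Icc.mem_of_tendsto hup (Filter.Eventually.of_forall fun m => (hu m).1)
    choose sf hsf hsle using fun m => (hu m).2
    have hsbound : ∀ m, sf m ≤ S0 := by
      intro m
      by_contra hcon
      push_neg at hcon
      exact absurd (hsle m) (not_le.2 (hlarge (u m) (hu m).1 (sf m) hcon))
    obtain ⟨ss, hssmem, φi, hφmono, hφtend⟩ :=
      isCompact_Icc.tendsto_subseq (x := sf)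
        (fun m => Set.mem_Icc.2 ⟨hsf m, hsbound m⟩)
    refine ⟨hpIcc, ss, hssmem.1, ?_⟩
    have htend := (hevalCont2.tendsto (p, ss)).comp
      ((hup.comp hφmono.tendsto_atTop).prodMk_nhds hφtend)
    exact le_of_tendsto htend (Filter.Eventually.of_forall fun m => hsle (φi m))
  have h0W : (0:ℝ) ∈ W := by
    refine ⟨Set.left_mem_Icc.2 zero_le_one, ?_⟩
    intro s hs
    rw [heval]
    have hform : (fun i => B 0 i + s * a i) = fun i => 1 + s * a i := by
      funext i; simp [hB]
    rw [hform]
    exact sig_one_add_pos k hk1 hkn a ha s hs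
  intro s hs
  by_contra hcon
  push_neg at hcon
  have h1V : (1:ℝ) ∈ V := by
    refine ⟨Set.right_mem_Icc.2 zero_le_one, s, hs, ?_⟩
    rw [heval]
    have hform : (fun i => B 1 i + s * a i) = fun i => b i + s * a i := by
      funext i; simp [hB]
    rw [hform]
    exact hcon
  have hsub : Set.Icc (0:ℝ) 1 ⊆ W ∪ V := by
    intro φ hφ
    by_cases hcase : ∀ s : ℝ, 0 ≤ s → 0 < (ψ φ).eval s
    · exact Or.inl ⟨hφ, hcase⟩
    · push_neg at hcase
      obtain ⟨sc, hsc1, hsc2⟩ := hcase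
      exact Or.inr ⟨hφ, sc, hsc1, hsc2⟩
  obtain ⟨φb, hφbIcc, hφbW, hφbV⟩ := (isPreconnected_closed_iff.1 isPreconnected_Icc) W V
    hWclosed hVclosed hsub ⟨0, Set.left_mem_Icc.2 zero_le_one, h0W⟩
    ⟨1, Set.right_mem_Icc.2 zero_le_one, h1V⟩
  obtain ⟨sb, hsb1, hsb2⟩ := hφbV.2
  exact absurd (hφbW.2 sb hsb1) (not_lt.2 hsb2)

end H3main

section Assembly

lemma esymm_continuous (n k : ℕ) : Continuous fun lam : Fin n → ℝ => esymm n k lam := by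
  simp only [esymm_eq_sig]
  exact continuous_sig k (fun lam => lam) (fun i => continuous_apply i)

lemma esymm_of_gt (n j : ℕ) (h : n < j) (x : Fin n → ℝ) : esymm n j x = 0 := by
  rw [esymm]
  rw [Finset.powersetCard_eq_empty.2 (by simpa using h)]
  simp

end Assembly

end Garding

/-- `Γₖ⁺` is an open convex cone: open, closed under addition and positive scaling. -/
theorem gamma_cone_open_convex_cone (n k : ℕ) :
    IsOpen {lam : Fin n → ℝ | inGamma n k lam} ∧
    (∀ x y : Fin n → ℝ, inGamma n k x → inGamma n k y → inGamma n k (x + y)) ∧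
    (∀ (c : ℝ) (x : Fin n → ℝ), 0 < c → inGamma n k x → inGamma n k (c • x)) := by
  refine ⟨?_, ?_, ?_⟩
  · have hset : {lam : Fin n → ℝ | inGamma n k lam}
        = ⋂ j ∈ Finset.Icc 1 k, {lam | 0 < esymm n j lam} := by
      ext lam
      simp [inGamma, Finset.mem_Icc, and_imp]
    rw [hset]
    exact isOpen_biInter_finset fun j _ =>
      isOpen_lt continuous_const (Garding.esymm_continuous n j)
  · intro x y hx hy
    by_cases hkn : k ≤ n
    · intro j hj1 hjk
      have hxj : inGamma n j x := fun i hi1 hij => hx i hi1 (hij.trans hjk)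
      have hyj : inGamma n j y := fun i hi1 hij => hy i hi1 (hij.trans hjk)
      have h3 := Garding.H3 j hj1 (hjk.trans hkn) x y hxj hyj 1 zero_le_one
      rw [Garding.esymm_eq_sig]
      have hform : (fun i => y i + 1 * x i) = fun i => (x + y) i := by
        funext i; simp [Pi.add_apply]; ring
      rwa [hform] at h3
    · exfalso
      have h0 := hx (n+1) (by omega) (by omega)
      rw [Garding.esymm_of_gt n (n+1) (by omega)] at h0
      exact lt_irrefl 0 h0
  · intro c x hc hx j hj1 hjk
    have h0 := hx j hj1 hjk
    rw [Garding.esymm_eq_sig] at h0 ⊢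
    have hform : (fun i => (c • x) i) = fun i => c * x i := rfl
    rw [show (c • x : Fin n → ℝ) = fun i => c * x i from rfl, Garding.sig_smul]
    positivity
end

section
/- Γₙ⁺ equals the positive orthant: {λ ∈ ℝⁿ : σ₁(λ) > 0, ..., σₙ(λ) > 0} = {λ ∈ ℝⁿ : λᵢ > 0 for all i}. -/
lemma expand (n : ℕ) (lam : Fin n → ℝ) (t : ℝ) :
    ∏ i, (lam i + t) = ∑ k ∈ Finset.range (n + 1), esymm n k lam * t ^ (n - k) := by
  rw [Finset.prod_add]
  rw [Finset.sum_powerset, Finset.card_univ,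
    Fintype.card_fin]
  refine Finset.sum_congr rfl fun k hk => ?_
  rw [esymm, Finset.sum_mul]
  refine Finset.sum_congr rfl fun s hs => ?_
  simp only [Finset.mem_powersetCard] at hs
  rw [Finset.prod_const, Finset.card_sdiff_of_subset (Finset.subset_univ s),
    Finset.card_univ, Fintype.card_fin, hs.2]

/-- `Γₙ⁺` equals the positive orthant. -/
theorem gamma_n_eq_positive_orthant (n : ℕ) :
    {lam : Fin n → ℝ | inGamma n n lam} = {lam : Fin n → ℝ | ∀ i, 0 < lam i} := by
  ext lam
  simp only [Set.mem_setOf_eq]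
  constructor
  · intro h i
    by_contra hle
    push_neg at hle
    set t : ℝ := -lam i with ht
    have ht0 : 0 ≤ t := by rw [ht]; linarith
    have hzero : ∏ j, (lam j + t) = 0 :=
      Finset.prod_eq_zero (Finset.mem_univ i) (by simp [ht])
    rw [expand] at hzero
    have hpos : 0 < ∑ k ∈ Finset.range (n + 1), esymm n k lam * t ^ (n - k) := by
      refine Finset.sum_pos' (fun k hk => ?_) ⟨n, by simp, ?_⟩
      · rcases Nat.eq_zero_or_pos k with rfl | hkpos
        · have : esymm n 0 lam = 1 := by simp [esymm]
          positivity
        · simp only [Finset.mem_range] at hk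
          have := h k hkpos (by omega : k ≤ n)
          positivity
      · have h1 : (1 : ℕ) ≤ n := i.pos
        have := h n h1 le_rfl
        simpa using this
    linarith
  · intro h j hj1 hjn
    rw [esymm]
    refine Finset.sum_pos (fun s _ => Finset.prod_pos fun i _ => h i) ?_
    exact Finset.powersetCard_nonempty.mpr (by simpa using hjn)
end

section
/- If λ ∈ Γₖ⁺ then ∂σₖ/∂λᵢ (λ) > 0 for every i = 1, ..., n. -/
open Polynomial Finset

namespace EsymmAux

/-- `∏ (X + C a)` over a multiset. -/
noncomputable def pM (M : Multiset ℝ) : ℝ[X] := (M.map fun a => X + C a).prod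

lemma pM_monic (M : Multiset ℝ) : (pM M).Monic :=
  monic_multiset_prod_of_monic M _ fun a _ => monic_X_add_C a

lemma pM_eq (M : Multiset ℝ) : pM M = ((M.map fun a => -a).map fun a => X - C a).prod := by
  rw [pM, Multiset.map_map]
  congr 1
  exact Multiset.map_congr rfl fun a _ => by simp [sub_neg_eq_add]

lemma pM_roots (M : Multiset ℝ) : (pM M).roots = M.map fun a => -a := by
  rw [pM_eq, roots_multiset_prod_X_sub_C]

lemma pM_natDegree (M : Multiset ℝ) : (pM M).natDegree = Multiset.card M := by
  rw [pM_eq, natDegree_multiset_prod_X_sub_C_eq_card, Multiset.card_map]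

lemma pM_coeff (M : Multiset ℝ) {j : ℕ} (hj : j ≤ Multiset.card M) :
    (pM M).coeff (Multiset.card M - j) = M.esymm j := by
  have h := Multiset.prod_X_add_C_coeff M (k := Multiset.card M - j) (by omega)
  rw [pM, h]
  congr 1
  omega

lemma esymm_eq_zero_of_lt {M : Multiset ℝ} {j : ℕ} (h : Multiset.card M < j) :
    M.esymm j = 0 := by
  rw [Multiset.esymm, Multiset.powersetCard_eq_empty _ h]
  simp

lemma esymm_cons (a : ℝ) (s : Multiset ℝ) (j : ℕ) :
    (a ::ₘ s).esymm (j + 1) = s.esymm (j + 1) + a * s.esymm j := by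
  rw [Multiset.esymm, Multiset.powersetCard_cons, Multiset.map_add, Multiset.sum_add,
    Multiset.map_map]
  have h2 : (Multiset.map (Multiset.prod ∘ Multiset.cons a) (Multiset.powersetCard j s)).sum
      = a * s.esymm j := by
    rw [Multiset.esymm, ← Multiset.sum_map_mul_left]
    congr 1
    exact Multiset.map_congr rfl fun t _ => by simp [Multiset.prod_cons]
  rw [h2]
  rfl

lemma esymm_zero' (s : Multiset ℝ) : s.esymm 0 = 1 := by
  simp [Multiset.esymm, Multiset.powersetCard_zero_left]

lemma coeff_flip (R : Multiset ℝ) (j : ℕ) :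
    ((R.map fun r => C r * X + 1).prod).coeff j = R.esymm j := by
  induction R using Multiset.induction generalizing j with
  | empty =>
    rcases j with _ | j
    · simp [esymm_zero']
    · have : Multiset.card (0 : Multiset ℝ) < j + 1 := by simp
      rw [Multiset.esymm, Multiset.powersetCard_eq_empty _ this]
      simp [coeff_one]
  | cons a s ih =>
    rw [Multiset.map_cons, Multiset.prod_cons, add_mul, one_mul, mul_assoc]
    rcases j with _ | j
    · simp only [coeff_add, mul_coeff_zero, coeff_C_mul, coeff_X_zero, zero_mul, mul_zero,
        zero_add, ih, esymm_zero']
    · rw [coeff_add, coeff_C_mul, coeff_X_mul, ih, ih, esymm_cons, add_comm]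

lemma card_roots_iterate (p : ℝ[X]) (r : ℕ) :
    Multiset.card p.roots ≤ Multiset.card (derivative^[r] p).roots + r := by
  induction r with
  | zero => simp
  | succ r ih =>
    rw [Function.iterate_succ_apply']
    have := Polynomial.card_roots_le_derivative (derivative^[r] p)
    omega

lemma natDegree_iterate_le (p : ℝ[X]) (r : ℕ) :
    (derivative^[r] p).natDegree ≤ p.natDegree - r := by
  induction r with
  | zero => simp
  | succ r ih =>
    rw [Function.iterate_succ_apply']
    have := Polynomial.natDegree_derivative_le (derivative^[r] p)
    omega


lemma descFactorial_cast_pos {a b : ℕ} (h : b ≤ a) : (0:ℝ) < (a.descFactorial b : ℝ) := by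
  exact_mod_cast Nat.pos_of_ne_zero (by rw [Ne, Nat.descFactorial_eq_zero_iff_lt]; omega)

lemma newton_special (M : Multiset ℝ) (k : ℕ) (hk : 2 ≤ k)
    (h2 : 0 < M.esymm (k-2)) (h1 : M.esymm (k-1) = 0) : M.esymm k ≤ 0 := by
  by_contra hc
  push_neg at hc
  set m := Multiset.card M with hm
  have hkm : k ≤ m := by
    by_contra hlt
    rw [esymm_eq_zero_of_lt (by omega)] at hc; exact lt_irrefl 0 hc
  set p := pM M with hp
  set D := derivative^[m - k] p with hD
  have hDco : ∀ j, j ≤ k → D.coeff j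
      = ((j + (m - k)).descFactorial (m - k) : ℝ) * M.esymm (k - j) := by
    intro j hj
    rw [hD, Polynomial.coeff_iterate_derivative, nsmul_eq_mul]
    congr 1
    have h' : j + (m-k) = m - (k - j) := by omega
    rw [hp, h', pM_coeff M (by omega)]
  have hpdeg : p.natDegree = m := pM_natDegree M
  have hproots : Multiset.card p.roots = m := by rw [hp, pM_roots]; simp [hm]
  have hDroots_ge : k ≤ Multiset.card D.roots := by
    have h := card_roots_iterate p (m - k); rw [← hD] at h; omega
  have hDdeg_le : D.natDegree ≤ k := by
    have h := natDegree_iterate_le p (m-k); rw [← hD] at h; omega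
  have hDroots_le : Multiset.card D.roots ≤ D.natDegree := Polynomial.card_roots' D
  have hDdeg : D.natDegree = k := by omega
  have hDroots : Multiset.card D.roots = k := by omega
  set R := D.roots with hR
  have hcard : Multiset.card R = D.natDegree := by omega
  have hvieta : ∀ i, i ≤ k → D.coeff (k - i) = D.leadingCoeff * (-1)^i * R.esymm i := by
    intro i hi
    have h := Polynomial.coeff_eq_esymm_roots_of_card hcard (k := k - i) (by omega)
    have hni : D.natDegree - (k - i) = i := by omega
    rwa [hni] at h
  have hlc : D.leadingCoeff = (m.descFactorial (m-k) : ℝ) := by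
    have h := hDco k le_rfl
    have h' : k + (m - k) = m := by omega
    rw [Polynomial.leadingCoeff, hDdeg, h, h', Nat.sub_self, esymm_zero', mul_one]
  have hlcpos : 0 < D.leadingCoeff := by rw [hlc]; exact descFactorial_cast_pos (by omega)
  -- esymm (k-1) of roots vanishes
  have e1 : R.esymm (k-1) = 0 := by
    have h := hvieta (k-1) (by omega)
    have hco : D.coeff (k - (k-1)) = 0 := by
      have h' : k - (k-1) = 1 := by omega
      rw [h', hDco 1 (by omega)]
      have h'' : k - 1 = k - 1 := rfl
      rw [h1, mul_zero]
    rw [hco] at h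
    have h0 : D.leadingCoeff * (-1:ℝ)^(k-1) ≠ 0 :=
      mul_ne_zero (ne_of_gt hlcpos) (pow_ne_zero _ (by norm_num))
    exact (mul_eq_zero.mp h.symm).resolve_left h0
  have e2 : 0 < D.leadingCoeff * (-1)^(k-2) * R.esymm (k-2) := by
    rw [← hvieta (k-2) (by omega)]
    have h' : k - (k-2) = 2 := by omega
    rw [h', hDco 2 (by omega)]
    exact mul_pos (descFactorial_cast_pos (by omega)) h2
  have e3 : 0 < D.leadingCoeff * (-1)^k * R.esymm k := by
    rw [← hvieta k le_rfl, Nat.sub_self, hDco 0 (by omega), Nat.sub_zero]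
    exact mul_pos (descFactorial_cast_pos (by omega)) hc
  have hprod : 0 < R.esymm (k-2) * R.esymm k := by
    have hk' : ((-1:ℝ))^k = (-1)^(k-2) := by
      conv_lhs => rw [show k = (k-2)+2 by omega]
      rw [pow_add]; norm_num
    rw [hk'] at e3
    have hmul := mul_pos e2 e3
    have hss : ((-1:ℝ))^(k-2) * (-1)^(k-2) = 1 := by
      rw [← mul_pow]; norm_num
    have hre : (D.leadingCoeff * (-1)^(k-2) * R.esymm (k-2)) *
        (D.leadingCoeff * (-1)^(k-2) * R.esymm k)
        = ((-1)^(k-2) * (-1)^(k-2)) * ((D.leadingCoeff * D.leadingCoeff) *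
          (R.esymm (k-2) * R.esymm k)) := by ring
    rw [hre, hss, one_mul] at hmul
    nlinarith [mul_pos hlcpos hlcpos]
  have h0R : (0:ℝ) ∉ R := by
    intro h0
    have hD0 : D.coeff 0 ≠ 0 := by
      rw [hDco 0 (by omega), Nat.sub_zero]
      exact ne_of_gt (mul_pos (descFactorial_cast_pos (by omega)) hc)
    have hev := Polynomial.isRoot_of_mem_roots h0
    rw [Polynomial.IsRoot, ← Polynomial.coeff_zero_eq_eval_zero] at hev
    exact hD0 hev
  -- the flipped polynomial
  set q := (R.map fun r => C r * X + 1).prod with hq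
  have hqroots : Multiset.card q.roots = k := by
    have hqe : q = C R.prod * ((R.map fun r => -r⁻¹).map fun a => X - C a).prod := by
      rw [hq, Multiset.map_map]
      rw [map_multiset_prod (C : ℝ →+* ℝ[X]) R, ← Multiset.prod_map_mul]
      refine congrArg Multiset.prod (Multiset.map_congr rfl fun r hr => ?_)
      have hr0 : r ≠ 0 := fun h => h0R (h ▸ hr)
      simp only [Function.comp_apply, map_neg, sub_neg_eq_add, mul_add, ← C_mul,
        mul_inv_cancel₀ hr0, map_one]
    have hP0 : R.prod ≠ 0 := by
      rw [Ne, Multiset.prod_eq_zero_iff]; exact h0R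
    rw [hqe, Polynomial.roots_C_mul _ hP0, roots_multiset_prod_X_sub_C]
    simp [hDroots]
  have hqdeg : q.natDegree ≤ k := by
    calc q.natDegree ≤ ((R.map fun r => C r * X + 1).map natDegree).sum :=
          natDegree_multiset_prod_le _
    _ ≤ Multiset.card ((R.map fun r => C r * X + 1).map natDegree) • 1 := by
        refine Multiset.sum_le_card_nsmul _ 1 ?_
        intro x hx
        simp only [Multiset.mem_map] at hx
        obtain ⟨_, ⟨r, _, rfl⟩, rfl⟩ := hx
        calc (C r * X + 1).natDegree = (C r * X + C 1).natDegree := by rw [map_one]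
        _ ≤ 1 := natDegree_linear_le
    _ = k := by simp [hDroots]
  set E := derivative^[k-2] q with hE
  have hEroots : 0 < Multiset.card E.roots := by
    have h := card_roots_iterate q (k-2); rw [← hE] at h; omega
  obtain ⟨x, hx⟩ := Multiset.exists_mem_of_ne_zero
    (by rw [← Multiset.card_pos]; exact hEroots)
  have hxr : E.eval x = 0 := (Polynomial.mem_roots'.mp hx).2
  have hEdeg : E.natDegree < 3 := by
    have h := natDegree_iterate_le q (k-2); rw [← hE] at h; omega
  have heval := Polynomial.eval_eq_sum_range' hEdeg x
  rw [Finset.sum_range_succ, Finset.sum_range_succ, Finset.sum_range_one] at heval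
  have hEco : ∀ j, E.coeff j = (((j + (k-2)).descFactorial (k-2)) : ℝ) * R.esymm (j + (k-2)) := by
    intro j
    rw [hE, Polynomial.coeff_iterate_derivative, nsmul_eq_mul, hq, coeff_flip]
  have hE0 : E.coeff 0 = (((k-2).descFactorial (k-2)) : ℝ) * R.esymm (k-2) := by
    rw [hEco 0, Nat.zero_add]
  have hE1 : E.coeff 1 = 0 := by
    rw [hEco 1, show 1 + (k-2) = k - 1 by omega, e1, mul_zero]
  have hE2 : E.coeff 2 = (((k).descFactorial (k-2)) : ℝ) * R.esymm k := by
    rw [hEco 2, show 2 + (k-2) = k by omega]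
  rw [hxr, hE0, hE1, hE2] at heval
  have hd0 : (0:ℝ) < (((k-2).descFactorial (k-2)) : ℝ) := descFactorial_cast_pos le_rfl
  have hd2 : (0:ℝ) < (((k).descFactorial (k-2)) : ℝ) := descFactorial_cast_pos (by omega)
  rcases mul_pos_iff.mp hprod with ⟨hA, hB⟩ | ⟨hA, hB⟩
  · nlinarith [sq_nonneg x, mul_pos hd2 hB, mul_pos hd0 hA]
  · nlinarith [sq_nonneg x, mul_neg_of_pos_of_neg hd2 hB, mul_neg_of_pos_of_neg hd0 hA]

lemma pM_def (M : Multiset ℝ) : pM M = (M.map fun a => X + C a).prod := rfl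

lemma pM_shift (M : Multiset ℝ) (t : ℝ) :
    pM (M.map (· + t)) = (pM M).comp (X + C t) := by
  rw [pM_def, pM_def, ← coe_compRingHom_apply, map_multiset_prod, Multiset.map_map,
    Multiset.map_map]
  refine congrArg Multiset.prod (Multiset.map_congr rfl fun a _ => ?_)
  simp only [Function.comp_apply, coe_compRingHom_apply, add_comp, X_comp, C_comp, add_assoc,
    ← C_add, add_comm t a]

lemma esymm_shift (M : Multiset ℝ) (t : ℝ) {j : ℕ} (hj : j ≤ Multiset.card M) :
    (M.map (· + t)).esymm j = (hasseDeriv (Multiset.card M - j) (pM M)).eval t := by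
  have h1 := pM_coeff (M.map (· + t)) (j := j) (by rwa [Multiset.card_map])
  rw [Multiset.card_map] at h1
  rw [← h1, pM_shift, ← taylor_apply, taylor_coeff]

lemma hasse_coeff_lo (M : Multiset ℝ) {j i : ℕ} (hj : j ≤ Multiset.card M) (hi : i ≤ j) :
    (hasseDeriv (Multiset.card M - j) (pM M)).coeff i
      = ((i + (Multiset.card M - j)).choose (Multiset.card M - j) : ℝ) * M.esymm (j - i) := by
  rw [hasseDeriv_coeff]
  congr 1
  have h' : i + (Multiset.card M - j) = Multiset.card M - (j - i) := by omega
  rw [h', pM_coeff M (by omega)]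

lemma hasse_coeff_hi (M : Multiset ℝ) {j i : ℕ} (hj : j ≤ Multiset.card M) (hi : j < i) :
    (hasseDeriv (Multiset.card M - j) (pM M)).coeff i = 0 := by
  rw [hasseDeriv_coeff, Polynomial.coeff_eq_zero_of_natDegree_lt, mul_zero]
  rw [pM_natDegree]; omega

lemma esymm_shift_pos (M : Multiset ℝ) {t : ℝ} (ht : 0 ≤ t) {j : ℕ} (hj : j ≤ Multiset.card M)
    (h : ∀ c, c ≤ j → 0 < M.esymm c) : 0 < (M.map (· + t)).esymm j := by
  rw [esymm_shift M t hj]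
  set m := Multiset.card M
  have hdeg : (hasseDeriv (m - j) (pM M)).natDegree < m + 1 := by
    have := natDegree_hasseDeriv_le (pM M) (m - j)
    rw [pM_natDegree] at this; omega
  rw [Polynomial.eval_eq_sum_range' hdeg]
  refine Finset.sum_pos' (fun i _ => ?_) ⟨0, Finset.mem_range.2 (by omega), ?_⟩
  · rcases le_or_gt i j with hij | hij
    · rw [hasse_coeff_lo M hj hij]
      have := h (j - i) (by omega)
      positivity
    · rw [hasse_coeff_hi M hj hij, zero_mul]
  · rw [hasse_coeff_lo M hj (Nat.zero_le j), pow_zero, mul_one, Nat.zero_add,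
      Nat.choose_self, Nat.cast_one, one_mul]
    exact h j le_rfl

lemma eval_lb (M : Multiset ℝ) {j : ℕ} (hj1 : 1 ≤ j) (hj : j ≤ Multiset.card M)
    (h : ∀ c, c < j → 0 < M.esymm c) {T : ℝ} (hT : 0 ≤ T) :
    ((Multiset.card M).choose (Multiset.card M - j) : ℝ) * T ^ j + M.esymm j
      ≤ (hasseDeriv (Multiset.card M - j) (pM M)).eval T := by
  set m := Multiset.card M
  have hdeg : (hasseDeriv (m - j) (pM M)).natDegree < m + 1 := by
    have := natDegree_hasseDeriv_le (pM M) (m - j)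
    rw [pM_natDegree] at this; omega
  rw [Polynomial.eval_eq_sum_range' hdeg]
  have hsub : ({0, j} : Finset ℕ) ⊆ Finset.range (m + 1) := by
    intro x hx
    simp only [Finset.mem_insert, Finset.mem_singleton] at hx
    rcases hx with rfl | rfl <;> exact Finset.mem_range.2 (by omega)
  rw [← Finset.sum_sdiff hsub, Finset.sum_pair (by omega : (0:ℕ) ≠ j)]
  have h0 : (hasseDeriv (m - j) (pM M)).coeff 0 * T ^ 0 = M.esymm j := by
    rw [hasse_coeff_lo M hj (Nat.zero_le j), pow_zero, mul_one, Nat.zero_add,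
      Nat.choose_self, Nat.cast_one, one_mul, Nat.sub_zero]
  have hjt : (hasseDeriv (m - j) (pM M)).coeff j * T ^ j
      = ((m).choose (m - j) : ℝ) * T ^ j := by
    rw [hasse_coeff_lo M hj le_rfl, Nat.sub_self, esymm_zero', mul_one]
    congr 3
    omega
  rw [h0, hjt]
  have hnn : 0 ≤ ∑ i ∈ Finset.range (m + 1) \ {0, j},
      (hasseDeriv (m - j) (pM M)).coeff i * T ^ i := by
    refine Finset.sum_nonneg fun i hi => ?_
    simp only [Finset.mem_sdiff, Finset.mem_insert, Finset.mem_singleton, not_or] at hi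
    obtain ⟨-, hi0, hij⟩ := hi
    rcases le_or_gt i j with hle | hlt
    · rw [hasse_coeff_lo M hj hle]
      have := h (j - i) (by omega)
      positivity
    · rw [hasse_coeff_hi M hj hlt, zero_mul]
  linarith

lemma esymm_eq_multiset (n j : ℕ) (lam : Fin n → ℝ) :
    esymm n j lam = ((univ : Finset (Fin n)).val.map lam).esymm j :=
  (Finset.esymm_map_val lam univ j).symm

lemma cons_decomp {n : ℕ} (ν : Fin n → ℝ) (i : Fin n) :
    (univ : Finset (Fin n)).val.map ν = ν i ::ₘ ((univ : Finset (Fin n)).erase i).val.map ν := by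
  rw [Finset.erase_val]
  conv_lhs => rw [← Multiset.cons_erase (Finset.mem_val.mpr (Finset.mem_univ i)),
    Multiset.map_cons]

theorem key {n : ℕ} (k : ℕ) (hk1 : 1 ≤ k) (lam : Fin n → ℝ) (hkn : k ≤ n)
    (hG : inGamma n k lam) (i : Fin n) :
    0 < (((univ : Finset (Fin n)).erase i).val.map lam).esymm (k-1) := by
  induction k using Nat.strong_induction_on generalizing lam with
  | _ k IH =>
  set μ := (((univ : Finset (Fin n)).erase i).val.map lam) with hμ
  have hcardμ : Multiset.card μ = n - 1 := by
    rw [hμ, Multiset.card_map, Finset.erase_val,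
      Multiset.card_erase_of_mem (Finset.mem_val.mpr (Finset.mem_univ i))]
    simp
  rcases lt_or_ge k 2 with hk2 | hk2
  · have hk : k = 1 := by omega
    subst hk
    rw [Nat.sub_self, esymm_zero']
    norm_num
  · have hn2 : 2 ≤ n := le_trans hk2 hkn
    have hμpos : ∀ c, c ≤ k - 2 → 0 < μ.esymm c := by
      intro c hc
      rcases Nat.eq_zero_or_pos c with rfl | hcpos
      · rw [esymm_zero']; norm_num
      · have hG' : inGamma n (c+1) lam := fun j hj1 hj2 => hG j hj1 (by omega)
        have h := IH (c+1) (by omega) (by omega) lam (by omega) hG'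
        simpa [hμ] using h
    set m := n - 1 with hm
    have hk1m : k - 1 ≤ Multiset.card μ := by omega
    set H := hasseDeriv (Multiset.card μ - (k-1)) (pM μ) with hH
    have hnv : ∀ t, 0 ≤ t → H.eval t ≠ 0 := by
      intro t ht hev
      set Mt := μ.map (· + t) with hMt
      have hs1 : Mt.esymm (k-1) = 0 := by
        rw [hMt, esymm_shift μ t hk1m, ← hH, hev]
      have hs2 : 0 < Mt.esymm (k-2) :=
        esymm_shift_pos μ ht (by omega) (fun c hc => hμpos c hc)
      have hfull : 0 < (((univ : Finset (Fin n)).val.map lam).map (· + t)).esymm k := by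
        refine esymm_shift_pos _ ht ?_ ?_
        · rw [Multiset.card_map]; simp [hkn]
        · intro c hc
          rcases Nat.eq_zero_or_pos c with rfl | hcpos
          · rw [esymm_zero']; norm_num
          · rw [← esymm_eq_multiset]
            exact hG c hcpos hc
      have hdecomp : (((univ : Finset (Fin n)).val.map lam).map (· + t))
          = (lam i + t) ::ₘ Mt := by
        rw [Multiset.map_map, cons_decomp ((fun x => x + t) ∘ lam) i]
        congr 1
        rw [hMt, hμ, Multiset.map_map]
      have hk0 : 0 < Mt.esymm k := by
        rw [hdecomp] at hfull
        rw [show k = (k-1)+1 by omega, esymm_cons, ← show k = (k-1)+1 by omega, hs1,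
          mul_zero, add_zero] at hfull
        exact hfull
      have := newton_special Mt k hk2 hs2 hs1
      linarith
    have heval0 : H.eval 0 = μ.esymm (k-1) := by
      rw [← Polynomial.coeff_zero_eq_eval_zero, hH, hasse_coeff_lo μ hk1m (Nat.zero_le _),
        Nat.zero_add, Nat.choose_self, Nat.cast_one, one_mul, Nat.sub_zero]
    by_contra hle
    push_neg at hle
    have hne0 : μ.esymm (k-1) ≠ 0 := fun h => hnv 0 le_rfl (by rw [heval0, h])
    have hlt : H.eval 0 < 0 := by rw [heval0]; exact lt_of_le_of_ne hle hne0
    set c := ((Multiset.card μ).choose (Multiset.card μ - (k-1)) : ℝ) with hc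
    have hcpos : (0:ℝ) < c := by
      rw [hc]
      exact_mod_cast Nat.choose_pos (by omega)
    set e := μ.esymm (k-1) with he
    set T := max 1 ((1 + |e|)/c) with hT
    have hT1 : (1:ℝ) ≤ T := le_max_left _ _
    have hTc : (1 + |e|)/c ≤ T := le_max_right _ _
    have hTpos : (0:ℝ) ≤ T := by linarith
    have hlb := eval_lb μ (by omega) hk1m (fun d hd => hμpos d (by omega)) hTpos
    have hTj : T ≤ T^(k-1) := by
      calc T = T^1 := (pow_one T).symm
      _ ≤ T^(k-1) := pow_le_pow_right₀ hT1 (by omega)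
    have h2 : 1 + |e| ≤ c * T := by
      rw [div_le_iff₀ hcpos] at hTc
      linarith [hTc]
    have hevT : 0 < H.eval T := by
      have hcT : c * T ≤ c * T^(k-1) := by nlinarith
      have habs := neg_abs_le e
      have : 0 < c * T^(k-1) + e := by nlinarith
      calc (0:ℝ) < c * T^(k-1) + e := this
      _ ≤ H.eval T := hlb
    have hsub := intermediate_value_Ioo hTpos (H.continuous.continuousOn)
    obtain ⟨t, htmem, ht0⟩ := hsub ⟨hlt, hevT⟩
    exact hnv t (le_of_lt htmem.1) ht0

end EsymmAux

open EsymmAux in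
/-- If `λ ∈ Γₖ⁺` then `∂σₖ/∂λᵢ (λ) > 0` for every `i`. -/
theorem esymm_partial_deriv_pos (n k : ℕ) (hk : 1 ≤ k) (hkn : k ≤ n)
    (lam : Fin n → ℝ) (h : inGamma n k lam) (i : Fin n) :
    0 < fderiv ℝ (esymm n k) lam (Pi.single i 1) := by
  set v : Fin n → ℝ := Pi.single i 1 with hv
  set μ := (((univ : Finset (Fin n)).erase i).val.map lam) with hμ
  set A := μ.esymm (k-1) with hA
  set B := μ.esymm k with hB
  have hdiff : DifferentiableAt ℝ (esymm n k) lam := by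
    refine DifferentiableAt.fun_sum fun s _ => ?_
    exact (HasFDerivAt.finset_prod fun j _ =>
      (ContinuousLinearMap.proj j : (Fin n → ℝ) →L[ℝ] ℝ).hasFDerivAt).differentiableAt
  have h1 : HasFDerivAt (esymm n k) (fderiv ℝ (esymm n k) lam) lam := hdiff.hasFDerivAt
  have hline : HasDerivAt (fun t : ℝ => lam + t • v) v 0 := by
    simpa using ((hasDerivAt_id (0:ℝ)).smul_const v).const_add lam
  have hg0 : lam + (0:ℝ) • v = lam := by simp
  have hcomp : HasDerivAt (fun t : ℝ => esymm n k (lam + t • v))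
      (fderiv ℝ (esymm n k) lam v) 0 := by
    have h2 := HasFDerivAt.comp_hasDerivAt 0 (by rw [hg0]; exact h1) hline
    simpa [Function.comp_def] using h2
  have hfun : (fun t : ℝ => esymm n k (lam + t • v)) = fun t => A * t + (lam i * A + B) := by
    funext t
    rw [esymm_eq_multiset]
    have hdecomp : ((univ : Finset (Fin n)).val.map (lam + t • v)) = (lam i + t) ::ₘ μ := by
      rw [cons_decomp (lam + t • v) i]
      congr 1
      · simp [hv]
      · rw [hμ]
        refine Multiset.map_congr rfl fun x hx => ?_
        have hxi : x ≠ i := by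
          rw [Finset.erase_val] at hx
          exact ((Finset.univ.nodup).mem_erase_iff.mp hx).1
        simp [hv, Pi.single_apply, hxi]
    rw [hdecomp, show k = (k-1)+1 by omega, esymm_cons]
    rw [← show k = (k-1)+1 by omega]
    ring
  rw [hfun] at hcomp
  have hrhs : HasDerivAt (fun t : ℝ => A * t + (lam i * A + B)) A 0 := by
    simpa using ((hasDerivAt_id (0:ℝ)).const_mul A).add_const (lam i * A + B)
  have hval : fderiv ℝ (esymm n k) lam v = A := hcomp.unique hrhs
  rw [hval]
  exact key k hk lam hkn h i
end

section
/- If λ ∈ Γ₃⁺ ⊆ ℝⁿ, then for each i, λᵢ(σ₁(λ) − λᵢ) ≤ σ₂(λ). -/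
open Finset

noncomputable def E {n : ℕ} (lam : Fin n → ℝ) (k : ℕ) (S : Finset (Fin n)) : ℝ :=
  ∑ s ∈ S.powersetCard k, ∏ j ∈ s, lam j

lemma E_zero {n : ℕ} (lam : Fin n → ℝ) (S : Finset (Fin n)) : E lam 0 S = 1 := by
  simp [E]

lemma E_insert {n : ℕ} (lam : Fin n → ℝ) (k : ℕ) {a : Fin n} {S : Finset (Fin n)}
    (ha : a ∉ S) : E lam (k + 1) (insert a S) = lam a * E lam k S + E lam (k + 1) S := by
  unfold E
  rw [powersetCard_succ_insert ha, sum_union, sum_image]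
  · rw [Finset.mul_sum]
    have : ∀ s ∈ S.powersetCard k, ∏ j ∈ insert a s, lam j = lam a * ∏ j ∈ s, lam j := by
      intro s hs
      have hs' := (mem_powersetCard.1 hs).1
      exact Finset.prod_insert (fun hmem => ha (hs' hmem))
    rw [Finset.sum_congr rfl this]
    ring
  · intro s hs t ht hst
    have hsS := (mem_powersetCard.1 hs).1
    have htS := (mem_powersetCard.1 ht).1
    have hna : a ∉ s := fun hmem => ha (hsS hmem)
    have hnb : a ∉ t := fun hmem => ha (htS hmem)
    have := congrArg (fun u => Finset.erase u a) hst
    simpa [Finset.erase_insert hna, Finset.erase_insert hnb] using this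
  · rw [Finset.disjoint_right]
    intro s hs hs'
    have := (mem_powersetCard.1 hs').1
    obtain ⟨t, ht, rfl⟩ := Finset.mem_image.1 hs
    exact ha (this (Finset.mem_insert_self a t))

lemma E_empty {n : ℕ} (lam : Fin n → ℝ) {k : ℕ} (hk : 1 ≤ k) : E lam k (∅ : Finset (Fin n)) = 0 := by
  unfold E
  rw [Finset.powersetCard_eq_empty.2 (by simp; omega), Finset.sum_empty]

lemma E_one {n : ℕ} (lam : Fin n → ℝ) (S : Finset (Fin n)) : E lam 1 S = ∑ j ∈ S, lam j := by
  classical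
  induction S using Finset.induction_on with
  | empty => rw [E_empty lam (by norm_num)]; simp
  | @insert a S ha ih =>
      have hins : E lam 1 (insert a S) = lam a * E lam 0 S + E lam 1 S := E_insert lam 0 ha
      rw [hins, E_zero, ih, Finset.sum_insert ha]; ring

lemma E_two {n : ℕ} (lam : Fin n → ℝ) (S : Finset (Fin n)) :
    2 * E lam 2 S = (∑ j ∈ S, lam j) ^ 2 - ∑ j ∈ S, (lam j) ^ 2 := by
  classical
  induction S using Finset.induction_on with
  | empty => rw [E_empty lam (by norm_num)]; simp
  | @insert a S ha ih =>
      have hins : E lam 2 (insert a S) = lam a * E lam 1 S + E lam 2 S := E_insert lam 1 ha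
      rw [hins, E_one, Finset.sum_insert ha, Finset.sum_insert ha]
      linear_combination ih

lemma E_three {n : ℕ} (lam : Fin n → ℝ) (S : Finset (Fin n)) :
    6 * E lam 3 S = (∑ j ∈ S, lam j) ^ 3 - 3 * (∑ j ∈ S, lam j) * (∑ j ∈ S, (lam j) ^ 2)
      + 2 * ∑ j ∈ S, (lam j) ^ 3 := by
  classical
  induction S using Finset.induction_on with
  | empty => rw [E_empty lam (by norm_num)]; simp
  | @insert a S ha ih =>
      have h2 := E_two lam S
      have hins : E lam 3 (insert a S) = lam a * E lam 2 S + E lam 3 S := E_insert lam 2 ha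
      rw [hins, Finset.sum_insert ha, Finset.sum_insert ha, Finset.sum_insert ha]
      linear_combination 3 * lam a * h2 + ih

/-- `(∑ λ³)² ≤ (∑ λ²)³`. -/
lemma cube_sum_sq_le {n : ℕ} (lam : Fin n → ℝ) (S : Finset (Fin n)) :
    (∑ j ∈ S, (lam j) ^ 3) ^ 2 ≤ (∑ j ∈ S, (lam j) ^ 2) ^ 3 := by
  have hq : (0 : ℝ) ≤ ∑ j ∈ S, (lam j) ^ 2 :=
    Finset.sum_nonneg fun j _ => sq_nonneg _
  have hcs := Finset.sum_mul_sq_le_sq_mul_sq S (fun j => lam j) (fun j => (lam j) ^ 2)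
  have h4 : ∑ j ∈ S, ((lam j) ^ 2) ^ 2 ≤ (∑ j ∈ S, (lam j) ^ 2) ^ 2 := by
    rw [sq (∑ j ∈ S, (lam j) ^ 2)]
    rw [Finset.sum_mul_sum]
    refine Finset.sum_le_sum fun j hj => ?_
    calc ((lam j) ^ 2) ^ 2 = (lam j) ^ 2 * (lam j) ^ 2 := by ring
      _ ≤ (lam j) ^ 2 * ∑ k ∈ S, (lam k) ^ 2 := by
          refine mul_le_mul_of_nonneg_left ?_ (sq_nonneg _)
          exact Finset.single_le_sum (fun k _ => sq_nonneg (lam k)) hj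
      _ = ∑ k ∈ S, (lam j) ^ 2 * (lam k) ^ 2 := by rw [Finset.mul_sum]
  calc (∑ j ∈ S, (lam j) ^ 3) ^ 2 = (∑ j ∈ S, lam j * (lam j) ^ 2) ^ 2 := by
        congr 1; exact Finset.sum_congr rfl fun j _ => by ring
    _ ≤ (∑ j ∈ S, (lam j) ^ 2) * ∑ j ∈ S, ((lam j) ^ 2) ^ 2 := hcs
    _ ≤ (∑ j ∈ S, (lam j) ^ 2) * (∑ j ∈ S, (lam j) ^ 2) ^ 2 :=
        mul_le_mul_of_nonneg_left h4 hq
    _ = (∑ j ∈ S, (lam j) ^ 2) ^ 3 := by ring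

lemma key_ineq (p q r : ℝ) (hq : 0 ≤ q) (hr : r ^ 2 ≤ q ^ 3) :
    4 * p * r ≤ p ^ 4 + 3 * q ^ 2 := by
  rcases eq_or_lt_of_le hq with hq0 | hq0
  · subst hq0
    have h0 : r ^ 2 = 0 := le_antisymm (by simpa using hr) (sq_nonneg r)
    have : r = 0 := by
      exact pow_eq_zero_iff (by norm_num) |>.1 h0
    subst this
    nlinarith [sq_nonneg (p ^ 2)]
  · nlinarith [mul_nonneg (le_of_lt hq0) (sq_nonneg (p ^ 2 - q)), sq_nonneg (p * q - r)]

/-- If `λ ∈ Γ₃⁺` then `λᵢ(σ₁(λ) − λᵢ) ≤ σ₂(λ)` for each `i`. -/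
theorem esymm_two_bound_of_gamma_three (n : ℕ) (lam : Fin n → ℝ)
    (h : inGamma n 3 lam) (i : Fin n) :
    lam i * (esymm n 1 lam - lam i) ≤ esymm n 2 lam := by
  classical
  set S : Finset (Fin n) := Finset.univ.erase i with hS
  have hiS : i ∉ S := Finset.notMem_erase i _
  have huniv : (Finset.univ : Finset (Fin n)) = insert i S := by
    rw [hS, Finset.insert_erase (Finset.mem_univ i)]
  have hesymmE : ∀ k : ℕ, esymm n k lam = E lam k (insert i S) := by
    intro k; rw [esymm, E, ← huniv]
  set a : ℝ := lam i with ha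
  set p : ℝ := ∑ j ∈ S, lam j with hp
  set q : ℝ := ∑ j ∈ S, (lam j) ^ 2 with hq
  set r : ℝ := ∑ j ∈ S, (lam j) ^ 3 with hr
  set e2 : ℝ := E lam 2 S with he2
  set e3 : ℝ := E lam 3 S with he3
  have h1 : esymm n 1 lam = a + p := by
    rw [hesymmE 1, E_insert lam 0 hiS, E_zero, E_one]; ring
  have h2 : esymm n 2 lam = a * p + e2 := by
    rw [hesymmE 2]
    have : E lam 2 (insert i S) = lam i * E lam 1 S + E lam 2 S := E_insert lam 1 hiS
    rw [this, E_one]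
  have h3 : esymm n 3 lam = a * e2 + e3 := by
    rw [hesymmE 3]
    exact E_insert lam 2 hiS
  have hs1 : (0 : ℝ) < a + p := h1 ▸ h 1 (by norm_num) (by norm_num)
  have hs2 : (0 : ℝ) < a * p + e2 := h2 ▸ h 2 (by norm_num) (by norm_num)
  have hs3 : (0 : ℝ) < a * e2 + e3 := h3 ▸ h 3 (by norm_num) (by norm_num)
  have hqnn : (0 : ℝ) ≤ q := Finset.sum_nonneg fun j _ => sq_nonneg _
  have hrq : r ^ 2 ≤ q ^ 3 := cube_sum_sq_le lam S
  have hkey : 4 * p * r ≤ p ^ 4 + 3 * q ^ 2 := key_ineq p q r hqnn hrq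
  have hB : 2 * e2 = p ^ 2 - q := E_two lam S
  have hC : 6 * e3 = p ^ 3 - 3 * p * q + 2 * r := E_three lam S
  have hNewton : p * e3 ≤ e2 ^ 2 := by
    have h12 : 12 * (e2 ^ 2 - p * e3) = p ^ 4 + 3 * q ^ 2 - 4 * p * r := by
      linear_combination (3 * (2 * e2 + p ^ 2 - q)) * hB - 2 * p * hC
    linarith
  -- now the sign analysis
  rw [h1, h2]
  have hgoal : a * (a + p - a) = a * p := by ring
  rw [hgoal]
  rcases le_or_gt a 0 with haneg | hapos
  · -- a ≤ 0 : then p > 0, so a * p ≤ 0 < a * p + e2 would need e2 ≥ 0... instead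
    -- from hs1, p > -a ≥ 0 so p > 0 and a * p ≤ 0 ≤ ... need a*p ≤ a*p + e2 i.e. 0 ≤ e2?
    -- No: goal is a * p ≤ a * p + e2 ⟺ 0 ≤ e2.  But directly: a*p ≤ 0 < σ₂ = a*p+e2.
    have hppos : 0 < p := by linarith
    nlinarith [mul_nonpos_of_nonpos_of_nonneg haneg hppos.le]
  · -- a > 0 : show 0 ≤ e2
    have he2nn : 0 ≤ e2 := by
      by_contra hneg
      push_neg at hneg
      have hppos : 0 < p := by
        by_contra hple
        push_neg at hple
        nlinarith [mul_nonpos_of_nonneg_of_nonpos hapos.le hple]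
      nlinarith [mul_pos hs2 (neg_pos.2 hneg), mul_pos hppos hs3]
    linarith
end

section
/- For an n×n symmetric matrix A whose eigenvalues lie in Γ_{k+1}⁺, the k-th Newton transformation tensor [Tₖ](A) = σₖ(A)·Id − [T_{k-1}](A)·A is a positive semidefinite matrix. -/
open Polynomial

namespace NewtonAux

noncomputable def Qp (s : Multiset ℝ) : ℝ[X] := (s.map fun a => X + C a).prod

lemma Qp_monic (s : Multiset ℝ) : (Qp s).Monic :=
  monic_multiset_prod_of_monic s _ fun a _ => monic_X_add_C a

lemma Qp_natDegree (s : Multiset ℝ) : (Qp s).natDegree = Multiset.card s := by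
  rw [Qp, natDegree_multiset_prod_of_monic]
  · rw [Multiset.map_map]
    have : (s.map fun a => natDegree (X + C a)) = s.map fun _ => 1 := by
      apply Multiset.map_congr rfl; intro a _; exact natDegree_X_add_C a
    simp [Function.comp_def, natDegree_X_add_C]
  · intro p hp
    obtain ⟨a, _, rfl⟩ := Multiset.mem_map.mp hp
    exact monic_X_add_C a

lemma coeff_Qp {s : Multiset ℝ} {k : ℕ} (hk : k ≤ Multiset.card s) :
    (Qp s).coeff (Multiset.card s - k) = s.esymm k := by
  rw [Qp, Multiset.prod_X_add_C_coeff s (Nat.sub_le _ _), Nat.sub_sub_self hk]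

lemma esymm_of_card_lt {s : Multiset ℝ} {k : ℕ} (h : Multiset.card s < k) :
    s.esymm k = 0 := by
  rw [Multiset.esymm, Multiset.powersetCard_eq_empty _ h]; rfl

lemma esymm_zero' (s : Multiset ℝ) : s.esymm 0 = 1 := by
  simp [Multiset.esymm]

lemma esymm_cons (a : ℝ) (s : Multiset ℝ) (j : ℕ) :
    (a ::ₘ s).esymm (j + 1) = s.esymm (j + 1) + a * s.esymm j := by
  rw [Multiset.esymm, Multiset.powersetCard_cons, Multiset.map_add, Multiset.sum_add,
    Multiset.esymm, Multiset.esymm, Multiset.map_map]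
  congr 1
  rw [← Multiset.sum_map_mul_left]
  apply congrArg
  apply Multiset.map_congr rfl
  intro t _; simp

lemma esymm_erase (a : ℝ) {s : Multiset ℝ} (ha : a ∈ s) (j : ℕ) :
    s.esymm (j + 1) = (s.erase a).esymm (j + 1) + a * (s.erase a).esymm j := by
  conv_lhs => rw [← Multiset.cons_erase ha]
  exact esymm_cons a (s.erase a) j

end NewtonAux

namespace NewtonAux

lemma Qp_cons (a : ℝ) (s : Multiset ℝ) : Qp (a ::ₘ s) = (X + C a) * Qp s := by
  simp [Qp, Multiset.map_cons, Multiset.prod_cons]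

lemma erase_cons (a b : ℝ) (t : Multiset ℝ) (hb : b ∈ t) :
    (a ::ₘ t).erase b = a ::ₘ t.erase b := by
  rcases eq_or_ne b a with rfl | hba
  · rw [Multiset.erase_cons_head, Multiset.cons_erase hb]
  · rw [Multiset.erase_cons_tail_of_mem hb]

lemma deriv_Qp (s : Multiset ℝ) :
    derivative (Qp s) = (s.map fun a => Qp (s.erase a)).sum := by
  induction s using Multiset.induction with
  | empty => simp [Qp]
  | cons a t ih =>
    rw [Qp_cons, derivative_mul, ih]
    simp only [derivative_add, derivative_X, derivative_C, add_zero, one_mul]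
    rw [Multiset.map_cons, Multiset.sum_cons, Multiset.erase_cons_head]
    have h1 : (t.map fun b => Qp ((a ::ₘ t).erase b))
        = t.map fun b => (X + C a) * Qp (t.erase b) := by
      apply Multiset.map_congr rfl
      intro b hb
      rw [erase_cons a b t hb, Qp_cons]
    rw [h1, Multiset.sum_map_mul_left]

lemma coeff_multiset_sum (t : Multiset ℝ) (f : ℝ → ℝ[X]) (n : ℕ) :
    ((t.map f).sum).coeff n = (t.map fun a => (f a).coeff n).sum := by
  simpa [Multiset.map_map, Function.comp_def] using
    map_multiset_sum (Polynomial.lcoeff ℝ n) (t.map f)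

lemma sum_esymm_erase {s : Multiset ℝ} {k : ℕ} (hk : k < Multiset.card s) :
    (s.map fun a => (s.erase a).esymm k).sum
      = ((Multiset.card s - k : ℕ) : ℝ) * s.esymm k := by
  set m := Multiset.card s with hm
  have h1 : (s.map fun a => (s.erase a).esymm k)
      = s.map fun a => (Qp (s.erase a)).coeff (m - 1 - k) := by
    apply Multiset.map_congr rfl
    intro a ha
    have hc : Multiset.card (s.erase a) = m - 1 := by
      rw [Multiset.card_erase_of_mem ha, Nat.pred_eq_sub_one]
    have h2 := coeff_Qp (s := s.erase a) (k := k) (by omega)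
    rw [hc] at h2
    rw [← h2]
  rw [h1, ← coeff_multiset_sum, ← deriv_Qp, coeff_derivative,
    show m - 1 - k + 1 = m - k by omega, coeff_Qp (le_of_lt hk),
    show ((m - k : ℕ) : ℝ) = ((m - 1 - k : ℕ) : ℝ) + 1 by
      rw [show m - k = (m - 1 - k) + 1 by omega]; push_cast; ring]
  ring

end NewtonAux

namespace NewtonAux

lemma sum_mul_esymm_erase {s : Multiset ℝ} {k : ℕ} (hk : k + 1 ≤ Multiset.card s) :
    (s.map fun a => a * (s.erase a).esymm k).sum = ((k : ℝ) + 1) * s.esymm (k + 1) := by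
  set m := Multiset.card s with hm
  have key1 : (s.map fun a => (X + C a) * Qp (s.erase a)).sum = m • Qp s := by
    have h : (s.map fun a => (X + C a) * Qp (s.erase a)) = s.map fun _ => Qp s := by
      apply Multiset.map_congr rfl; intro a ha
      rw [← Qp_cons, Multiset.cons_erase ha]
    rw [h, Multiset.map_const', Multiset.sum_replicate]
  have key2 : (s.map fun a => C a * Qp (s.erase a)).sum
      = m • Qp s - X * derivative (Qp s) := by
    rw [eq_sub_iff_add_eq, ← key1, deriv_Qp, ← Multiset.sum_map_mul_left,
      ← Multiset.sum_map_add]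
    congr 1
    apply Multiset.map_congr rfl
    intro a _
    ring
  have hcoeff := congrArg (fun p : ℝ[X] => p.coeff (m - 1 - k)) key2
  simp only [coeff_multiset_sum] at hcoeff
  have hL : (s.map fun a => (C a * Qp (s.erase a)).coeff (m - 1 - k))
      = s.map fun a => a * (s.erase a).esymm k := by
    apply Multiset.map_congr rfl
    intro a ha
    have hc : Multiset.card (s.erase a) = m - 1 := by
      rw [Multiset.card_erase_of_mem ha, Nat.pred_eq_sub_one]
    have h2 := coeff_Qp (s := s.erase a) (k := k) (by omega)
    rw [hc] at h2
    rw [coeff_C_mul, h2]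
  rw [hL] at hcoeff
  rw [hcoeff]
  have hQ : (Qp s).coeff (m - 1 - k) = s.esymm (k + 1) := by
    have h2 := coeff_Qp (s := s) (k := k + 1) hk
    rw [← hm, show m - (k + 1) = m - 1 - k by omega] at h2
    exact h2
  rcases Nat.eq_zero_or_pos (m - 1 - k) with h0 | hpos
  · rw [h0] at hQ ⊢
    rw [coeff_sub, coeff_X_mul_zero, coeff_smul, hQ, sub_zero, nsmul_eq_mul]
    have : m = k + 1 := by omega
    rw [this]
    push_cast
    ring
  · obtain ⟨e, he⟩ : ∃ e, m - 1 - k = e + 1 := ⟨m - 1 - k - 1, by omega⟩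
    rw [he] at hQ ⊢
    rw [coeff_sub, coeff_X_mul, coeff_derivative, coeff_smul, hQ, nsmul_eq_mul]
    have hcast : (m : ℝ) = (e + 1 : ℕ) + ((k : ℝ) + 1) := by
      have : m = (e + 1) + (k + 1) := by omega
      rw [this]; push_cast; ring
    rw [hcast]
    push_cast
    ring

end NewtonAux

namespace NewtonAux

lemma Qp_shift (s : Multiset ℝ) (t : ℝ) :
    Qp (s.map fun a => a + t) = (Qp s).comp (X + C t) := by
  rw [Qp, Qp, Polynomial.multiset_prod_comp, Multiset.map_map, Multiset.map_map]
  apply congrArg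
  apply Multiset.map_congr rfl
  intro a _
  simp only [Function.comp_apply, add_comp, X_comp, C_comp, C_add]
  ring

lemma esymm_shift (s : Multiset ℝ) (j : ℕ) (hj : j ≤ Multiset.card s) (t : ℝ) :
    (s.map fun a => a + t).esymm j
      = ∑ i ∈ Finset.range (j + 1),
          (((i + (Multiset.card s - j)).choose (Multiset.card s - j) : ℕ) : ℝ)
            * s.esymm (j - i) * t ^ i := by
  set m := Multiset.card s with hm
  have hcard : Multiset.card (s.map fun a => a + t) = m := by
    rw [Multiset.card_map]
  have h1 : (s.map fun a => a + t).esymm j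
      = (Qp (s.map fun a => a + t)).coeff (m - j) := by
    have h2 := coeff_Qp (s := s.map fun a => a + t) (k := j) (by rw [hcard]; exact hj)
    rw [hcard] at h2
    exact h2.symm
  have hdeg : ((Qp s).hasseDeriv (m - j)).natDegree < j + 1 := by
    have h3 := Polynomial.natDegree_hasseDeriv_le (Qp s) (m - j)
    rw [Qp_natDegree] at h3
    omega
  rw [h1, Qp_shift, ← taylor_apply, Polynomial.taylor_coeff,
    Polynomial.eval_eq_sum_range' hdeg]
  apply Finset.sum_congr rfl
  intro i hi
  rw [Finset.mem_range] at hi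
  rw [Polynomial.hasseDeriv_coeff]
  have h4 : (Qp s).coeff (i + (m - j)) = s.esymm (j - i) := by
    have h5 := coeff_Qp (s := s) (k := j - i) (by omega)
    rw [← hm, show m - (j - i) = i + (m - j) by omega] at h5
    exact h5
  rw [h4]

lemma esymm_shift_pos_left {s : Multiset ℝ} {j : ℕ} {t : ℝ} (hj : j ≤ Multiset.card s)
    (h0 : 0 < s.esymm j) (h : ∀ r, 1 ≤ r → r ≤ j → 0 ≤ s.esymm r) (ht : 0 ≤ t) :
    0 < (s.map fun a => a + t).esymm j := by
  rw [esymm_shift s j hj t]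
  apply Finset.sum_pos'
  · intro i hi
    apply mul_nonneg (mul_nonneg (by positivity) ?_) (by positivity)
    rcases Nat.eq_zero_or_pos (j - i) with h5 | h5
    · rw [h5, esymm_zero']; norm_num
    · exact h (j - i) h5 (by omega)
  · refine ⟨0, Finset.mem_range.mpr (by omega), ?_⟩
    simp only [Nat.zero_add, zero_add, Nat.choose_self, Nat.cast_one, one_mul, pow_zero,
      mul_one, Nat.sub_zero]
    exact h0

lemma esymm_shift_pos_right {s : Multiset ℝ} {j : ℕ} {t : ℝ} (hj : j ≤ Multiset.card s)
    (h : ∀ r, 1 ≤ r → r ≤ j → 0 ≤ s.esymm r) (ht : 0 < t) :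
    0 < (s.map fun a => a + t).esymm j := by
  rw [esymm_shift s j hj t]
  apply Finset.sum_pos'
  · intro i hi
    apply mul_nonneg (mul_nonneg (by positivity) ?_) (by positivity)
    rcases Nat.eq_zero_or_pos (j - i) with h5 | h5
    · rw [h5, esymm_zero']; norm_num
    · exact h (j - i) h5 (by omega)
  · refine ⟨j, Finset.mem_range.mpr (by omega), ?_⟩
    rw [Nat.sub_self, esymm_zero']
    have hch : 0 < (((j + (Multiset.card s - j)).choose (Multiset.card s - j) : ℕ) : ℝ) := by
      exact_mod_cast Nat.choose_pos (by omega)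
    have hp : 0 < t ^ j := pow_pos ht j
    nlinarith

end NewtonAux

namespace NewtonAux

lemma esymm_shift_continuous {s : Multiset ℝ} {j : ℕ} (hj : j ≤ Multiset.card s) :
    Continuous fun t : ℝ => (s.map fun a => a + t).esymm j := by
  have h : (fun t : ℝ => (s.map fun a => a + t).esymm j)
      = fun t : ℝ => ∑ i ∈ Finset.range (j + 1),
          (((i + (Multiset.card s - j)).choose (Multiset.card s - j) : ℕ) : ℝ)
            * s.esymm (j - i) * t ^ i := funext fun t => esymm_shift s j hj t
  rw [h]
  apply continuous_finset_sum
  intro i _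
  exact (continuous_const.mul (continuous_pow i))

lemma esymm_shift_zero (s : Multiset ℝ) (j : ℕ) :
    (s.map fun a => a + 0).esymm j = s.esymm j := by
  simp

lemma esymm_nonneg_of_shift_pos {s : Multiset ℝ} {j : ℕ} (hj : j ≤ Multiset.card s)
    (H : ∀ t : ℝ, 0 < t → 0 < (s.map fun a => a + t).esymm j) :
    0 ≤ s.esymm j := by
  have hc := esymm_shift_continuous (s := s) (j := j) hj
  have hseq : Filter.Tendsto (fun n : ℕ => (1 : ℝ) / (n + 1)) Filter.atTop (nhds 0) :=
    tendsto_one_div_add_atTop_nhds_zero_nat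
  have ht := (hc.tendsto 0).comp hseq
  have h0 : (s.map fun a => a + (0 : ℝ)).esymm j = s.esymm j := esymm_shift_zero s j
  rw [h0] at ht
  exact ge_of_tendsto' ht fun n => (H _ (by positivity)).le

lemma all_zero_of_sum_zero {u : Multiset ℝ} {f : ℝ → ℝ} (hsum : (u.map f).sum = 0)
    (hnn : ∀ b ∈ u, 0 ≤ f b) : ∀ b ∈ u, f b = 0 := by
  intro b hb
  have h1 : f b ≤ (u.map f).sum := by
    apply Multiset.single_le_sum
    · intro x hx
      obtain ⟨c, hc, rfl⟩ := Multiset.mem_map.mp hx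
      exact hnn c hc
    · exact Multiset.mem_map_of_mem f hb
  have h2 := hnn b hb
  rw [hsum] at h1
  linarith

end NewtonAux

namespace NewtonAux

lemma esymm_erase' {s : Multiset ℝ} (a : ℝ) (ha : a ∈ s) {j : ℕ} (hj : 1 ≤ j) :
    s.esymm j = (s.erase a).esymm j + a * (s.erase a).esymm (j - 1) := by
  obtain ⟨j', rfl⟩ := Nat.exists_eq_succ_of_ne_zero (by omega : j ≠ 0)
  simpa using esymm_erase a ha j'

end NewtonAux

namespace NewtonAux

theorem esymm_erase_pos :
    ∀ (k n : ℕ) (s : Multiset ℝ), Multiset.card s ≤ n →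
      (∀ j, 1 ≤ j → j ≤ k + 1 → 0 < s.esymm j) →
      ∀ a ∈ s, 0 < (s.erase a).esymm k := by
  intro k
  induction k using Nat.strong_induction_on with
  | _ k IHk =>
  intro n
  induction n with
  | zero =>
    intro s hs hΓ a ha
    rw [Multiset.card_eq_zero.mp (le_antisymm hs (Nat.zero_le _))] at ha
    exact absurd ha (Multiset.notMem_zero a)
  | succ n IHn =>
    intro s hs hΓ a ha
    rcases Nat.eq_zero_or_pos k with rfl | hk1
    · rw [esymm_zero']; norm_num
    have hm : Multiset.card s ≤ n + 1 := hs
    have hkm : k + 1 ≤ Multiset.card s := by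
      by_contra h
      have h1 := esymm_of_card_lt (s := s) (k := k + 1) (by omega)
      have h2 := hΓ (k + 1) (by omega) le_rfl
      rw [h1] at h2; exact lt_irrefl 0 h2
    by_contra hneg
    push_neg at hneg
    have hcera : Multiset.card (s.erase a) = Multiset.card s - 1 := by
      rw [Multiset.card_erase_of_mem ha, Nat.pred_eq_sub_one]
    set g : ℝ → ℝ := fun t => ((s.erase a).map fun x => x + t).esymm k with hg
    have hgc : Continuous g := esymm_shift_continuous (by omega : k ≤ Multiset.card (s.erase a))
    have hg0 : g 0 = (s.erase a).esymm k := esymm_shift_zero _ _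
    have hmid : ∀ r, 1 ≤ r → r ≤ k - 1 → 0 < (s.erase a).esymm r := by
      intro r h1 h2
      exact IHk r (by omega) (n + 1) s hs (fun j hj1 hj2 => hΓ j hj1 (by omega)) a ha
    have hlb : ∀ t : ℝ, 0 ≤ t → (s.erase a).esymm k + t ^ k ≤ g t := by
      intro t htpos
      show (s.erase a).esymm k + t ^ k ≤ ((s.erase a).map fun x => x + t).esymm k
      rw [esymm_shift _ _ (by omega : k ≤ Multiset.card (s.erase a)) t]
      have hsub : ({0, k} : Finset ℕ) ⊆ Finset.range (k + 1) := by
        intro x hx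
        rcases Finset.mem_insert.mp hx with rfl | hx
        · exact Finset.mem_range.mpr (by omega)
        · rw [Finset.mem_singleton.mp hx]; exact Finset.mem_range.mpr (by omega)
      have hle := Finset.sum_le_sum_of_subset_of_nonneg hsub (f := fun i =>
        (((i + (Multiset.card (s.erase a) - k)).choose (Multiset.card (s.erase a) - k) : ℕ) : ℝ)
          * (s.erase a).esymm (k - i) * t ^ i) ?_
      · refine le_trans ?_ hle
        rw [Finset.sum_pair (by omega : (0 : ℕ) ≠ k)]
        have e0 : (((0 + (Multiset.card (s.erase a) - k)).choose
            (Multiset.card (s.erase a) - k) : ℕ) : ℝ) * (s.erase a).esymm (k - 0) * t ^ 0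
            = (s.erase a).esymm k := by
          rw [Nat.zero_add, Nat.choose_self, Nat.sub_zero, pow_zero]
          push_cast; ring
        have ek : t ^ k ≤ (((k + (Multiset.card (s.erase a) - k)).choose
            (Multiset.card (s.erase a) - k) : ℕ) : ℝ) * (s.erase a).esymm (k - k) * t ^ k := by
          rw [Nat.sub_self, esymm_zero', mul_one]
          have hch : (1 : ℝ) ≤ (((k + (Multiset.card (s.erase a) - k)).choose
              (Multiset.card (s.erase a) - k) : ℕ) : ℝ) := by
            exact_mod_cast Nat.one_le_iff_ne_zero.mpr (Nat.choose_pos (by omega)).ne'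
          nlinarith [pow_nonneg htpos k]
        rw [e0]
        linarith
      · intro i hi hni
        have hir : i < k + 1 := Finset.mem_range.mp hi
        have hi0 : i ≠ 0 := fun h => hni (by simp [h])
        have hik : i ≠ k := fun h => hni (by simp [h])
        apply mul_nonneg (mul_nonneg (by positivity) ?_) (by positivity)
        exact (hmid (k - i) (by omega) (by omega)).le
    set B : ℝ := max 1 (|(s.erase a).esymm k| + 1) with hB
    set S : Set ℝ := {t : ℝ | 0 ≤ t ∧ g t ≤ 0} with hS
    have hSclosed : IsClosed S :=
      IsClosed.inter (isClosed_le continuous_const continuous_id)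
        (isClosed_le hgc continuous_const)
    have hSne : S.Nonempty := ⟨0, le_refl 0, by rw [hg0]; exact hneg⟩
    have hSbdd : BddAbove S := by
      refine ⟨B, fun t htS => ?_⟩
      by_contra hLt
      push_neg at hLt
      have ht1 : (1 : ℝ) ≤ t := le_trans (le_max_left _ _) hLt.le
      have ht2 : |(s.erase a).esymm k| + 1 ≤ t := le_trans (le_max_right _ _) hLt.le
      have h3 := hlb t (by linarith)
      have h4 : t ≤ t ^ k := le_self_pow₀ (by linarith) (by omega)
      have h6 := neg_abs_le ((s.erase a).esymm k)
      have h7 := htS.2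
      linarith
    set t0 : ℝ := sSup S with ht0def
    have ht0S : t0 ∈ S := hSclosed.csSup_mem hSne hSbdd
    have ht0nn : 0 ≤ t0 := ht0S.1
    have hgt0le : g t0 ≤ 0 := ht0S.2
    have hright : ∀ t, t0 < t → 0 < g t := by
      intro t htt
      by_contra h
      push_neg at h
      have hmem : t ∈ S := ⟨by linarith, h⟩
      have := le_csSup hSbdd hmem
      linarith
    have hgt0ge : 0 ≤ g t0 := by
      have hseq : Filter.Tendsto (fun nn : ℕ => t0 + 1 / (nn + 1)) Filter.atTop (nhds t0) := by
        have := Filter.Tendsto.add (tendsto_const_nhds (x := t0) (f := Filter.atTop (α := ℕ)))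
          tendsto_one_div_add_atTop_nhds_zero_nat
        simpa using this
      have ht := (hgc.tendsto t0).comp hseq
      refine ge_of_tendsto' ht fun nn => (hright _ ?_).le
      have hp : (0 : ℝ) < 1 / ((nn : ℝ) + 1) := by positivity
      linarith
    have hgt0 : g t0 = 0 := le_antisymm hgt0le hgt0ge
    -- shifted multiset
    have hWcard : Multiset.card (s.map fun x => x + t0) = Multiset.card s :=
      Multiset.card_map _ _
    have hWΓ : ∀ j, 1 ≤ j → j ≤ k + 1 → 0 < (s.map fun x => x + t0).esymm j := by
      intro j h1 h2
      exact esymm_shift_pos_left (by omega) (hΓ j h1 h2)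
        (fun r hr1 hr2 => (hΓ r hr1 (by omega)).le) ht0nn
    have ha' : a + t0 ∈ (s.map fun x => x + t0) := Multiset.mem_map_of_mem _ ha
    have hWer : (s.map fun x => x + t0).erase (a + t0) = (s.erase a).map fun x => x + t0 :=
      (Multiset.map_erase _ (add_left_injective t0) a s).symm
    have hucard : Multiset.card ((s.map fun x => x + t0).erase (a + t0))
        = Multiset.card s - 1 := by
      rw [Multiset.card_erase_of_mem ha', hWcard, Nat.pred_eq_sub_one]
    have hu0 : ((s.map fun x => x + t0).erase (a + t0)).esymm k = 0 := by
      rw [hWer]; exact hgt0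
    have huk' : 0 < ((s.map fun x => x + t0).erase (a + t0)).esymm (k - 1) := by
      rcases Nat.eq_zero_or_pos (k - 1) with h5 | h5
      · rw [h5, esymm_zero']; norm_num
      · exact IHk (k - 1) (by omega) (n + 1) _ (by omega)
          (fun j hj1 hj2 => hWΓ j hj1 (by omega)) _ ha'
    have hapos : 0 < a + t0 := by
      have h1 := esymm_erase' (a + t0) ha' (j := k) hk1
      have h2 := hWΓ k (by omega) (by omega)
      rw [h1, hu0, zero_add] at h2
      nlinarith
    have huk2 : 0 < ((s.map fun x => x + t0).erase (a + t0)).esymm (k + 1) := by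
      have h1 := esymm_erase' (a + t0) ha' (j := k + 1) (by omega)
      rw [show k + 1 - 1 = k from rfl, hu0, mul_zero, add_zero] at h1
      have h2 := hWΓ (k + 1) (by omega) le_rfl
      rwa [h1] at h2
    have hk2card : k + 1 ≤ Multiset.card ((s.map fun x => x + t0).erase (a + t0)) := by
      by_contra h
      rw [esymm_of_card_lt (by omega)] at huk2
      exact lt_irrefl 0 huk2
    have hujpos : ∀ j, 1 ≤ j → j ≤ k - 1 →
        0 < ((s.map fun x => x + t0).erase (a + t0)).esymm j := by
      intro j h1 h2
      exact IHk j (by omega) (n + 1) _ (by omega)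
        (fun r hr1 hr2 => hWΓ r hr1 (by omega)) _ ha'
    have hunn : ∀ r, 1 ≤ r → r ≤ k + 1 →
        0 ≤ ((s.map fun x => x + t0).erase (a + t0)).esymm r := by
      intro r h1 h2
      rcases lt_trichotomy r k with h | rfl | h
      · exact (hujpos r h1 (by omega)).le
      · exact le_of_eq hu0.symm
      · have hr : r = k + 1 := by omega
        rw [hr]; exact huk2.le
    have hCL : ∀ b ∈ (s.map fun x => x + t0).erase (a + t0),
        0 ≤ (((s.map fun x => x + t0).erase (a + t0)).erase b).esymm k := by
      intro b hb
      have hcub : Multiset.card ((((s.map fun x => x + t0).erase (a + t0))).erase b)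
          = Multiset.card s - 2 := by
        rw [Multiset.card_erase_of_mem hb, hucard, Nat.pred_eq_sub_one]
        omega
      apply esymm_nonneg_of_shift_pos (by omega)
      intro t htpos
      have hΓut : ∀ j, 1 ≤ j → j ≤ k + 1 →
          0 < ((((s.map fun x => x + t0).erase (a + t0)).map fun x => x + t).esymm j) := by
        intro j hj1 hj2
        exact esymm_shift_pos_right (by omega)
          (fun r hr1 hr2 => hunn r hr1 (by omega)) htpos
      have h1 := IHn (((s.map fun x => x + t0).erase (a + t0)).map fun x => x + t)
        (by rw [Multiset.card_map]; omega) hΓut (b + t) (Multiset.mem_map_of_mem _ hb)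
      rwa [← Multiset.map_erase _ (add_left_injective t) b] at h1
    have hsum0 : (((s.map fun x => x + t0).erase (a + t0)).map fun b =>
        ((((s.map fun x => x + t0).erase (a + t0))).erase b).esymm k).sum = 0 := by
      rw [sum_esymm_erase (by omega), hu0, mul_zero]
    have heach := all_zero_of_sum_zero hsum0 hCL
    have hfinal : (((s.map fun x => x + t0).erase (a + t0)).map fun b =>
        b * ((((s.map fun x => x + t0).erase (a + t0))).erase b).esymm k).sum
        = ((k : ℝ) + 1) * ((s.map fun x => x + t0).erase (a + t0)).esymm (k + 1) :=
      sum_mul_esymm_erase (by omega)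
    have hzero : (((s.map fun x => x + t0).erase (a + t0)).map fun b =>
        b * ((((s.map fun x => x + t0).erase (a + t0))).erase b).esymm k).sum = 0 := by
      have hcongr : (((s.map fun x => x + t0).erase (a + t0)).map fun b =>
          b * ((((s.map fun x => x + t0).erase (a + t0))).erase b).esymm k)
          = ((s.map fun x => x + t0).erase (a + t0)).map fun _ => (0 : ℝ) := by
        apply Multiset.map_congr rfl
        intro b hb
        rw [heach b hb, mul_zero]
      rw [hcongr, Multiset.map_const', Multiset.sum_replicate, smul_zero]
    rw [hzero] at hfinal
    have hpos : 0 < ((k : ℝ) + 1) * ((s.map fun x => x + t0).erase (a + t0)).esymm (k + 1) := by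
      positivity
    rw [← hfinal] at hpos
    exact lt_irrefl 0 hpos

end NewtonAux




lemma esymm_eq_multiset (n k : ℕ) (lam : Fin n → ℝ) :
    esymm n k lam = ((Finset.univ : Finset (Fin n)).val.map lam).esymm k :=
  (Finset.esymm_map_val lam Finset.univ k).symm

/-- For a symmetric matrix `A` whose eigenvalues lie in `Γ_{k+1}⁺`, the `k`-th Newton
transformation tensor `Tₖ(A)`, defined recursively by `T₀ = 1` and
`T_{j+1} = σ_{j+1}(A)·Id − T_j·A`, is positive semidefinite. -/
theorem newton_tensor_posSemidef (n k : ℕ) (A : Matrix (Fin n) (Fin n) ℝ)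
    (hA : A.IsHermitian) (T : ℕ → Matrix (Fin n) (Fin n) ℝ)
    (hT0 : T 0 = 1)
    (hTrec : ∀ j : ℕ,
      T (j + 1) = esymm n (j + 1) hA.eigenvalues • (1 : Matrix (Fin n) (Fin n) ℝ) - T j * A)
    (hcone : inGamma n (k + 1) hA.eigenvalues) :
    (T k).PosSemidef := by
  classical
  set lam := hA.eigenvalues with hlam
  set ms : Multiset ℝ := (Finset.univ : Finset (Fin n)).val.map lam with hms
  have hmem : ∀ i : Fin n, lam i ∈ ms := fun i =>
    Multiset.mem_map_of_mem lam (Finset.mem_univ_val i)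
  set U : Matrix (Fin n) (Fin n) ℝ := (hA.eigenvectorUnitary : Matrix (Fin n) (Fin n) ℝ)
    with hU
  have hU1 : U * star U = 1 := Matrix.mem_unitaryGroup_iff.mp hA.eigenvectorUnitary.2
  have hU2 : star U * U = 1 := Matrix.mem_unitaryGroup_iff'.mp hA.eigenvectorUnitary.2
  have hspec : A = U * Matrix.diagonal lam * star U := by
    have h := hA.spectral_theorem
    simpa using h
  -- the diagonal entries
  set d : ℕ → Fin n → ℝ := fun j i => ((ms.erase (lam i)).esymm j) with hd
  have hrec : ∀ j i, d (j + 1) i = esymm n (j + 1) lam - d j i * lam i := by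
    intro j i
    have h1 := NewtonAux.esymm_erase' (s := ms) (lam i) (hmem i) (j := j + 1) (by omega)
    rw [esymm_eq_multiset, ← hms]
    rw [hd]
    simp only []
    rw [h1]
    simp only [Nat.add_sub_cancel]
    ring
  have hdiag : ∀ j, T j = U * Matrix.diagonal (d j) * star U := by
    intro j
    induction j with
    | zero =>
      rw [hT0]
      have : d 0 = fun _ => (1 : ℝ) := by
        funext i
        exact NewtonAux.esymm_zero' _
      rw [this]
      rw [Matrix.diagonal_one, Matrix.mul_one, hU1]
    | succ j ih =>
      rw [hTrec j, ih, hspec]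
      have hmul : U * Matrix.diagonal (d j) * star U * (U * Matrix.diagonal lam * star U)
          = U * (Matrix.diagonal (d j) * Matrix.diagonal lam) * star U := by
        simp only [Matrix.mul_assoc]
        rw [← Matrix.mul_assoc (star U) U, hU2, Matrix.one_mul]
      rw [hmul]
      have hsm : esymm n (j + 1) lam • (1 : Matrix (Fin n) (Fin n) ℝ)
          = U * Matrix.diagonal (fun _ => esymm n (j + 1) lam) * star U := by
        rw [← Matrix.smul_one_eq_diagonal, Matrix.mul_smul, Matrix.smul_mul,
          Matrix.mul_one, hU1]
      rw [hsm]
      rw [← Matrix.sub_mul, ← Matrix.mul_sub, Matrix.diagonal_mul_diagonal,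
        Matrix.diagonal_sub]
      have hfun : (fun i => esymm n (j + 1) lam - d j i * lam i) = d (j + 1) := by
        funext i
        rw [hrec j i]
      rw [hfun]
  rw [hdiag k]
  rw [Matrix.star_eq_conjTranspose]
  apply Matrix.PosSemidef.mul_mul_conjTranspose_same
  apply Matrix.posSemidef_diagonal_iff.mpr
  intro i
  apply le_of_lt
  apply NewtonAux.esymm_erase_pos k (Multiset.card ms) ms le_rfl ?_ (lam i) (hmem i)
  intro j hj1 hj2
  rw [hms, ← esymm_eq_multiset]
  exact hcone j hj1 hj2
end

section
/- For any symmetric n×n matrix A and 0 ≤ k ≤ n−1, the trace of [Tₖ](A)·A equals (k+1)·σ_{k+1}(A). -/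
theorem esymm_zero_aux (n : ℕ) (lam : Fin n → ℝ) : esymm n 0 lam = 1 := by
  simp [esymm]

theorem esymm_eq_aeval_aux (n j : ℕ) (lam : Fin n → ℝ) :
    esymm n j lam = MvPolynomial.aeval lam (MvPolynomial.esymm (Fin n) ℝ j) := by
  simp [esymm, MvPolynomial.esymm, map_sum, MvPolynomial.aeval_prod]

/-- Numeric Newton identity. -/
theorem newton_num_aux (n k : ℕ) (lam : Fin n → ℝ) :
    ((k : ℝ)) * esymm n k lam = (-1 : ℝ) ^ (k + 1) *
      ∑ a ∈ Finset.HasAntidiagonal.antidiagonal k with a.1 < k,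
        (-1 : ℝ) ^ a.1 * esymm n a.1 lam * ∑ i, lam i ^ a.2 := by
  have h := congrArg (MvPolynomial.aeval lam) (MvPolynomial.mul_esymm_eq_sum (Fin n) ℝ k)
  simpa [map_sum, MvPolynomial.psum, esymm_eq_aeval_aux] using h

theorem conj_pow_aux {n : ℕ} (U D B : Matrix (Fin n) (Fin n) ℝ)
    (hU : U * star U = 1) (hU' : star U * U = 1) (hB : B = U * D * star U) (m : ℕ) :
    B ^ m = U * D ^ m * star U := by
  have h1 : star U * B = D * star U := by
    rw [hB, ← Matrix.mul_assoc, ← Matrix.mul_assoc, hU', Matrix.one_mul]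
  induction m with
  | zero => simp [hU]
  | succ m ih =>
    rw [pow_succ, ih, Matrix.mul_assoc, Matrix.mul_assoc, h1, pow_succ]
    simp only [Matrix.mul_assoc]

theorem trace_pow_eig_aux (n : ℕ) (A : Matrix (Fin n) (Fin n) ℝ) (hA : A.IsHermitian) (m : ℕ) :
    (A ^ m).trace = ∑ i, hA.eigenvalues i ^ m := by
  have hU := (Matrix.mem_unitaryGroup_iff).mp (hA.eigenvectorUnitary).2
  have hU' := (Matrix.mem_unitaryGroup_iff').mp (hA.eigenvectorUnitary).2
  rw [conj_pow_aux _ _ _ hU hU' hA.spectral_theorem m, Matrix.trace_mul_cycle, hU',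
    Matrix.one_mul, Matrix.diagonal_pow, Matrix.trace_diagonal]
  simp

/-- For a symmetric `n×n` matrix `A` and `0 ≤ k ≤ n−1`,
`Tr(Tₖ(A)·A) = (k+1)·σ_{k+1}(A)`. -/
theorem newton_tensor_mul_trace (n k : ℕ) (hk : k ≤ n - 1) (A : Matrix (Fin n) (Fin n) ℝ)
    (hA : A.IsHermitian) (T : ℕ → Matrix (Fin n) (Fin n) ℝ)
    (hT0 : T 0 = 1)
    (hTrec : ∀ j : ℕ,
      T (j + 1) = esymm n (j + 1) hA.eigenvalues • (1 : Matrix (Fin n) (Fin n) ℝ) - T j * A) :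
    (T k * A).trace = ((k : ℝ) + 1) * esymm n (k + 1) hA.eigenvalues := by
  set lam := hA.eigenvalues with hlam
  set E : ℕ → ℝ := fun j => esymm n j lam with hE
  set P : ℕ → ℝ := fun m => ∑ i, lam i ^ m with hP
  -- closed form for T
  have hTform : ∀ j, T j = ∑ i ∈ Finset.range (j + 1),
      ((-1 : ℝ) ^ i * E (j - i)) • A ^ i := by
    intro j
    induction j with
    | zero => simp [hT0, hE, esymm_zero_aux]
    | succ j ih =>
      rw [hTrec j, ih, Finset.sum_range_succ' (fun i =>
        ((-1 : ℝ) ^ i * E (j + 1 - i)) • A ^ i) (j+1)]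
      rw [Finset.sum_mul]
      simp only [pow_zero, pow_succ, Nat.succ_sub_succ_eq_sub, one_mul, Nat.sub_zero,
        smul_mul_assoc]
      rw [sub_eq_iff_eq_add, add_comm, add_comm 1 j]
      have hS : ∑ x ∈ Finset.range (j + 1),
          ((-1 : ℝ) ^ x * -1 * E (j - x)) • (A ^ x * A)
          = -∑ x ∈ Finset.range (j + 1),
          ((-1 : ℝ) ^ x * E (j - x)) • (A ^ x * A) := by
        rw [← Finset.sum_neg_distrib]
        apply Finset.sum_congr rfl
        intro i _
        rw [show ((-1:ℝ)^i * -1 * E (j-i)) = -((-1:ℝ)^i * E (j-i)) by ring, neg_smul]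
      rw [hS]
      abel
  -- trace of T k * A
  have htr : (T k * A).trace
      = ∑ i ∈ Finset.range (k + 1), (-1 : ℝ) ^ i * E (k - i) * P (i + 1) := by
    rw [hTform k, Finset.sum_mul, Matrix.trace_sum]
    apply Finset.sum_congr rfl
    intro i _
    rw [Matrix.smul_mul, Matrix.trace_smul, ← pow_succ, trace_pow_eig_aux n A hA (i+1)]
    simp [hP, smul_eq_mul, hlam]
  -- reflect the sum
  have hrefl : ∑ i ∈ Finset.range (k + 1), (-1 : ℝ) ^ i * E (k - i) * P (i + 1)
      = (-1 : ℝ) ^ k * ∑ j ∈ Finset.range (k + 1), (-1 : ℝ) ^ j * E j * P (k + 1 - j) := by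
    rw [← Finset.sum_range_reflect (fun i => (-1 : ℝ) ^ i * E (k - i) * P (i + 1)) (k+1),
      Finset.mul_sum]
    apply Finset.sum_congr rfl
    intro j hj
    have hjk : j ≤ k := Nat.lt_succ_iff.mp (Finset.mem_range.mp hj)
    have h1 : k + 1 - 1 - j = k - j := by omega
    have h2 : k - (k - j) = j := by omega
    have h3 : k - j + 1 = k + 1 - j := by omega
    have h4 : (-1 : ℝ) ^ (k - j) = (-1 : ℝ) ^ k * (-1 : ℝ) ^ j := by
      have : (-1 : ℝ) ^ k = (-1 : ℝ) ^ (k - j) * (-1 : ℝ) ^ j := by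
        rw [← pow_add, Nat.sub_add_cancel hjk]
      rw [this, mul_assoc, ← pow_add, ← two_mul, pow_mul]
      norm_num
    rw [h1, h2, h3, h4]
    ring
  -- Newton's identity for k+1
  have hnewton := newton_num_aux n (k + 1) lam
  -- rewrite the antidiagonal sum as a range sum
  have hanti : ∑ a ∈ Finset.HasAntidiagonal.antidiagonal (k+1) with a.1 < k+1,
      (-1 : ℝ) ^ a.1 * esymm n a.1 lam * ∑ i, lam i ^ a.2
      = ∑ j ∈ Finset.range (k + 1), (-1 : ℝ) ^ j * E j * P (k + 1 - j) := by
    rw [Finset.sum_filter, Finset.Nat.sum_antidiagonal_eq_sum_range_succ_mk,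
      Finset.sum_range_succ]
    simp only [lt_self_iff_false, if_false, add_zero]
    apply Finset.sum_congr rfl
    intro j hj
    rw [if_pos (Finset.mem_range.mp hj)]
  rw [hanti] at hnewton
  have hsq : ((-1 : ℝ) ^ (k + 1 + 1)) * ((-1 : ℝ) ^ (k + 1 + 1)) = 1 := by
    rw [← pow_add, ← two_mul, pow_mul]; norm_num
  have hS' : ∑ j ∈ Finset.range (k + 1), (-1 : ℝ) ^ j * E j * P (k + 1 - j)
      = (-1 : ℝ) ^ (k + 1 + 1) * (((k : ℝ) + 1) * esymm n (k+1) lam) := by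
    have := congrArg (fun x => (-1 : ℝ) ^ (k + 1 + 1) * x) hnewton
    beta_reduce at this
    rw [← mul_assoc ((-1:ℝ) ^ (k + 1 + 1)) ((-1:ℝ) ^ (k + 1 + 1)), hsq, one_mul] at this
    rw [← this]
    push_cast
    ring
  rw [htr, hrefl, hS', ← mul_assoc]
  have : (-1 : ℝ) ^ k * (-1 : ℝ) ^ (k + 1 + 1) = 1 := by
    rw [← pow_add]
    have : k + (k + 1 + 1) = 2 * (k + 1) := by omega
    rw [this, pow_mul]; norm_num
  rw [this, one_mul]
end

section
/- Recursion identity for polarized Newton tensors: for symmetric matrices B, C and 0 ≤ l ≤ k−1, [T_{k-1}](B^{(l)}, C^{(k-1-l)})·C = (C(k,l)/(k·C(k-1,l)))·Σ_k(B^{(l)}, C^{(k-l)})·Id − (C(k,l)/C(k-1,l))·[Tₖ](B^{(l)}, C^{(k-l)}) − (C(k-1,l-1)/C(k-1,l))·[T_{k-1}](B^{(l-1)}, C^{(k-l)})·B, where B^{(m)} denotes m copies of B and C(a,b) denotes the binomial coefficient. -/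
/-- The generalized Kronecker delta `δ^{i₁...iₖ}_{j₁...jₖ}`:
the determinant of the matrix of ordinary Kronecker deltas. -/
noncomputable def gkdelta {k n : ℕ} (i j : Fin k → Fin n) : ℝ :=
  Matrix.det (Matrix.of fun a b : Fin k => if i a = j b then (1 : ℝ) else 0)

/-- The polarization `Σ_k(A₁,...,A_k) = (1/(k-1)!) δ^{i₁...iₖ}_{j₁...jₖ}
(A₁)_{i₁j₁}⋯(A_k)_{iₖjₖ}` of the `k`-th elementary symmetric function. -/
noncomputable def polSigma (n k : ℕ) (A : Fin k → Matrix (Fin n) (Fin n) ℝ) : ℝ :=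
  (1 / (Nat.factorial (k - 1) : ℝ)) *
    ∑ i : Fin k → Fin n, ∑ j : Fin k → Fin n,
      gkdelta i j * ∏ a : Fin k, A a (i a) (j a)

/-- The polarized Newton transformation tensor
`[Tₖ]_{pq}(A₁,...,Aₖ) = (1/k!) δ^{p,i₁,...,iₖ}_{q,j₁,...,jₖ} (A₁)_{i₁j₁}⋯(Aₖ)_{iₖjₖ}`. -/
noncomputable def polNewton (n k : ℕ) (A : Fin k → Matrix (Fin n) (Fin n) ℝ) :
    Matrix (Fin n) (Fin n) ℝ :=
  Matrix.of fun p q : Fin n =>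
    (1 / (Nat.factorial k : ℝ)) *
      ∑ i : Fin k → Fin n, ∑ j : Fin k → Fin n,
        gkdelta (Fin.cons p i) (Fin.cons q j) * ∏ a : Fin k, A a (i a) (j a)

lemma gkdelta_comm {k n : ℕ} (i j : Fin k → Fin n) : gkdelta i j = gkdelta j i := by
  unfold gkdelta
  rw [← Matrix.det_transpose]
  congr 1
  ext a b
  simp [Matrix.transpose, eq_comm]

lemma gkdelta_perm {k n : ℕ} (σ : Equiv.Perm (Fin k)) (i j : Fin k → Fin n) :
    gkdelta (i ∘ σ) (j ∘ σ) = gkdelta i j := by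
  unfold gkdelta
  rw [← Matrix.det_submatrix_equiv_self σ (Matrix.of fun a b : Fin k => if i a = j b then (1:ℝ) else 0)]
  rfl

lemma gkdelta_row_perm {k n : ℕ} (σ : Equiv.Perm (Fin k)) (i j : Fin k → Fin n) :
    gkdelta (i ∘ σ) j = (Equiv.Perm.sign σ : ℤ) * gkdelta i j := by
  unfold gkdelta
  rw [← Matrix.det_permute σ (Matrix.of fun a b : Fin k => if i a = j b then (1:ℝ) else 0)]
  · push_cast; ring_nf; rfl

lemma gkdelta_cons_expand {k n : ℕ} (p q : Fin n) (i j : Fin (k+1) → Fin n) :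
    gkdelta (Fin.cons p i) (Fin.cons q j)
      = (if p = q then (1:ℝ) else 0) * gkdelta i j
        - ∑ m : Fin (k+1), (if i m = q then (1:ℝ) else 0) * gkdelta (Function.update i m p) j := by
  set M : Matrix (Fin (k+2)) (Fin (k+2)) ℝ :=
    Matrix.of fun a b : Fin (k+2) =>
      if (Fin.cons p i : Fin (k+2) → Fin n) a = (Fin.cons q j : Fin (k+2) → Fin n) b then (1:ℝ)
      else 0 with hM
  have h := Matrix.det_succ_column_zero M
  have hM00 : M 0 0 = if p = q then (1:ℝ) else 0 := by simp [hM]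
  have hMm0 : ∀ m : Fin (k+1), M m.succ 0 = if i m = q then (1:ℝ) else 0 := by
    intro m; simp [hM, Fin.cons_succ]
  have e0 : (M.submatrix (0 : Fin (k+2)).succAbove Fin.succ).det = gkdelta i j := by
    have : M.submatrix (0 : Fin (k+2)).succAbove Fin.succ
        = Matrix.of fun a b : Fin (k+1) => if i a = j b then (1:ℝ) else 0 := by
      ext a b
      simp [hM, Fin.succAbove_zero, Fin.cons_succ]
    rw [this]; rfl
  have em : ∀ m : Fin (k+1), (M.submatrix (m.succ).succAbove Fin.succ).det
      = (-1:ℝ)^(m:ℕ) * gkdelta (Function.update i m p) j := by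
    intro m
    have hmat : M.submatrix (m.succ).succAbove Fin.succ
        = Matrix.of fun a b : Fin (k+1) =>
            if ((Function.update i m p) ∘ (Fin.cycleRange m).symm) a = j b then (1:ℝ) else 0 := by
      ext c b
      have hrow : (Fin.cons p i : Fin (k+2) → Fin n) ((m.succ).succAbove c)
          = Function.update i m p ((Fin.cycleRange m).symm c) := by
        induction c using Fin.cases with
        | zero =>
            have h0 : (m.succ).succAbove 0 = 0 :=
              Fin.succAbove_of_castSucc_lt _ _ (by simp [Fin.succ_pos])
            rw [h0, Fin.cons_zero, show ((Fin.cycleRange m).symm 0 : Fin (k+1)) = m from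
              Fin.cycleRange_symm_zero m, Function.update_self]
        | succ d =>
            rw [Fin.succ_succAbove_succ, Fin.cons_succ, Fin.cycleRange_symm_succ,
              Function.update_of_ne (Fin.succAbove_ne m d)]
      simp [hM, hrow]
    have hdg : (Matrix.of fun a b : Fin (k+1) =>
        if ((Function.update i m p) ∘ (Fin.cycleRange m).symm) a = j b then (1:ℝ) else 0).det
        = gkdelta ((Function.update i m p) ∘ (Fin.cycleRange m).symm) j := rfl
    rw [hmat, hdg, gkdelta_row_perm]
    have hs : ((Equiv.Perm.sign (Fin.cycleRange m).symm : ℤ) : ℝ) = (-1:ℝ)^(m:ℕ) := by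
      rw [Equiv.Perm.sign_symm, Fin.sign_cycleRange]; push_cast; ring
    rw [hs]
  have key : gkdelta (Fin.cons p i) (Fin.cons q j) = M.det := rfl
  rw [key, h, Fin.sum_univ_succ, hM00, e0]
  have hterm : ∀ m : Fin (k+1), (-1:ℝ)^((m.succ : Fin (k+2)):ℕ) * M m.succ 0 *
      (M.submatrix (m.succ).succAbove Fin.succ).det
      = -((if i m = q then (1:ℝ) else 0) * gkdelta (Function.update i m p) j) := by
    intro m
    rw [hMm0 m, em m, Fin.val_succ, pow_succ]
    have h2 : ((-1:ℝ)^(m:ℕ))^2 = 1 := by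
      rw [← pow_mul, mul_comm, pow_mul]; norm_num
    linear_combination (-(if i m = q then (1:ℝ) else 0) * gkdelta (Function.update i m p) j) * h2
  rw [Finset.sum_congr rfl fun m _ => hterm m, Finset.sum_neg_distrib]
  simp only [Fin.val_zero, pow_zero, one_mul]
  ring

noncomputable def Umat (n k : ℕ) (A : Fin k → Matrix (Fin n) (Fin n) ℝ) :
    Matrix (Fin n) (Fin n) ℝ :=
  Matrix.of fun p q : Fin n =>
    ∑ i : Fin k → Fin n, ∑ j : Fin k → Fin n,
      gkdelta (Fin.cons p i) (Fin.cons q j) * ∏ a : Fin k, A a (i a) (j a)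

noncomputable def Vsum (n k : ℕ) (A : Fin k → Matrix (Fin n) (Fin n) ℝ) : ℝ :=
  ∑ i : Fin k → Fin n, ∑ j : Fin k → Fin n,
    gkdelta i j * ∏ a : Fin k, A a (i a) (j a)

lemma sum_fun_comp_perm {k n : ℕ} (σ : Equiv.Perm (Fin k)) (F : (Fin k → Fin n) → ℝ) :
    ∑ f : Fin k → Fin n, F (f ∘ σ) = ∑ f : Fin k → Fin n, F f :=
  Fintype.sum_bijective _ (Equiv.arrowCongr σ.symm (Equiv.refl (Fin n))).bijective _ _
    (fun f => rfl)

lemma sum_fun_cons {k n : ℕ} (F : (Fin (k+1) → Fin n) → ℝ) :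
    ∑ f : Fin (k+1) → Fin n, F f = ∑ x : Fin n, ∑ g : Fin k → Fin n, F (Fin.cons x g) := by
  rw [← (Fin.consEquiv (fun _ => Fin n)).sum_comp F, Fintype.sum_prod_type]
  rfl

open Matrix in
lemma S_eq {k n : ℕ} (A : Fin (k+1) → Matrix (Fin n) (Fin n) ℝ)
    (hA : ∀ a, (A a)ᵀ = A a) (m : Fin (k+1)) (p q : Fin n) :
    ∑ i : Fin (k+1) → Fin n, ∑ j : Fin (k+1) → Fin n,
      (if i m = q then (1:ℝ) else 0) * gkdelta (Function.update i m p) j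
        * ∏ a : Fin (k+1), A a (i a) (j a)
    = (Umat n k (fun c => A (m.succAbove c)) * A m) p q := by
  set σ : Equiv.Perm (Fin (k+1)) := Fin.cycleRange m with hσ
  have step1 : ∑ i : Fin (k+1) → Fin n, ∑ j : Fin (k+1) → Fin n,
      (if i m = q then (1:ℝ) else 0) * gkdelta (Function.update i m p) j
        * ∏ a : Fin (k+1), A a (i a) (j a)
      = ∑ i : Fin (k+1) → Fin n, ∑ j : Fin (k+1) → Fin n,
        (if i 0 = q then (1:ℝ) else 0) * gkdelta (Function.update i 0 p) j
          * ∏ a : Fin (k+1), A (σ.symm a) (i a) (j a) := by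
    rw [← sum_fun_comp_perm σ (fun i => ∑ j : Fin (k+1) → Fin n,
      (if i m = q then (1:ℝ) else 0) * gkdelta (Function.update i m p) j
        * ∏ a : Fin (k+1), A a (i a) (j a))]
    refine Finset.sum_congr rfl fun i _ => ?_
    rw [← sum_fun_comp_perm σ]
    refine Finset.sum_congr rfl fun j _ => ?_
    have h1 : (i ∘ σ) m = i 0 := by
      simp only [Function.comp_apply, hσ, Fin.cycleRange_self]
    have h2 : Function.update (i ∘ σ) m p = (Function.update i 0 p) ∘ σ := by
      rw [Function.update_comp_equiv i σ 0 p]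
      congr 1
      rw [hσ, Fin.cycleRange_symm_zero]
    have h3 : ∏ a : Fin (k+1), A a ((i ∘ σ) a) ((j ∘ σ) a)
        = ∏ a : Fin (k+1), A (σ.symm a) (i a) (j a) := by
      rw [← Equiv.prod_comp σ (fun b => A (σ.symm b) (i b) (j b))]
      refine Finset.prod_congr rfl fun a _ => ?_
      simp
    rw [h1, h2, gkdelta_perm, h3]
  rw [step1]
  rw [sum_fun_cons (fun i => ∑ j : Fin (k+1) → Fin n,
    (if i 0 = q then (1:ℝ) else 0) * gkdelta (Function.update i 0 p) j
      * ∏ a : Fin (k+1), A (σ.symm a) (i a) (j a))]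
  have hsz : σ.symm 0 = m := by rw [hσ]; exact Fin.cycleRange_symm_zero m
  have hss : ∀ c : Fin k, σ.symm c.succ = m.succAbove c := by
    intro c; rw [hσ]; exact Fin.cycleRange_symm_succ m c
  have step2 : ∀ r : Fin n, ∀ i' : Fin k → Fin n,
      (∑ j : Fin (k+1) → Fin n,
        (if (Fin.cons r i' : Fin (k+1) → Fin n) 0 = q then (1:ℝ) else 0)
          * gkdelta (Function.update (Fin.cons r i') 0 p) j
          * ∏ a : Fin (k+1), A (σ.symm a) ((Fin.cons r i' : Fin (k+1) → Fin n) a) (j a))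
      = (if r = q then (1:ℝ) else 0) *
          ∑ s : Fin n, ∑ j' : Fin k → Fin n,
            gkdelta (Fin.cons p i') (Fin.cons s j') * (A m r s *
              ∏ c : Fin k, A (m.succAbove c) (i' c) (j' c)) := by
    intro r i'
    rw [sum_fun_cons (fun j => (if (Fin.cons r i' : Fin (k+1) → Fin n) 0 = q then (1:ℝ) else 0)
      * gkdelta (Function.update (Fin.cons r i') 0 p) j
      * ∏ a : Fin (k+1), A (σ.symm a) ((Fin.cons r i' : Fin (k+1) → Fin n) a) (j a))]
    rw [Finset.mul_sum]
    refine Finset.sum_congr rfl fun s _ => ?_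
    rw [Finset.mul_sum]
    refine Finset.sum_congr rfl fun j' _ => ?_
    rw [Fin.update_cons_zero, Fin.cons_zero]
    rw [Fin.prod_univ_succ]
    simp only [Fin.cons_zero, Fin.cons_succ, hsz, hss]
    ring
  rw [Finset.sum_congr rfl fun r _ => Finset.sum_congr rfl fun i' _ => step2 r i']
  rw [Matrix.mul_apply]
  rw [Finset.sum_comm]
  simp only [ite_mul, one_mul, zero_mul, Finset.sum_ite_eq', Finset.mem_univ, if_true]
  rw [Finset.sum_comm]
  refine Finset.sum_congr rfl fun s _ => ?_
  rw [show Umat n k (fun c => A (m.succAbove c)) p s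
      = ∑ y : Fin k → Fin n, ∑ j' : Fin k → Fin n,
          gkdelta (Fin.cons p y) (Fin.cons s j')
            * ∏ c : Fin k, A (m.succAbove c) (y c) (j' c) from rfl]
  rw [Finset.sum_mul]
  refine Finset.sum_congr rfl fun y _ => ?_
  rw [Finset.sum_mul]
  refine Finset.sum_congr rfl fun j' _ => ?_
  have hqs : A m s q = A m q s := congrFun (congrFun (hA m) q) s
  rw [hqs]
  ring

lemma sum_swap3 {α β : Type*} [Fintype α] [Fintype β] (f : α → α → β → ℝ) :
    ∑ i : α, ∑ j : α, ∑ m : β, f i j m = ∑ m : β, ∑ i : α, ∑ j : α, f i j m := by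
  have h1 : ∀ i : α, ∑ j : α, ∑ m : β, f i j m = ∑ m : β, ∑ j : α, f i j m :=
    fun i => Finset.sum_comm
  simp_rw [h1]
  exact Finset.sum_comm

open Matrix in
lemma M1 {k n : ℕ} (A : Fin (k+1) → Matrix (Fin n) (Fin n) ℝ)
    (hA : ∀ a, (A a)ᵀ = A a) :
    Umat n (k+1) A = Vsum n (k+1) A • (1 : Matrix (Fin n) (Fin n) ℝ)
      - ∑ m : Fin (k+1), Umat n k (fun c => A (m.succAbove c)) * A m := by
  ext p q
  have e : ∀ i j : Fin (k+1) → Fin n,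
      gkdelta (Fin.cons p i) (Fin.cons q j) * ∏ a : Fin (k+1), A a (i a) (j a)
      = (if p = q then (1:ℝ) else 0) * (gkdelta i j * ∏ a : Fin (k+1), A a (i a) (j a))
        - ∑ m : Fin (k+1), (if i m = q then (1:ℝ) else 0)
            * gkdelta (Function.update i m p) j * ∏ a : Fin (k+1), A a (i a) (j a) := by
    intro i j
    rw [gkdelta_cons_expand, sub_mul, Finset.sum_mul, mul_assoc]
  have lhs_eq : Umat n (k+1) A p q
      = (if p = q then (1:ℝ) else 0) * Vsum n (k+1) A
        - ∑ m : Fin (k+1), (Umat n k (fun c => A (m.succAbove c)) * A m) p q := by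
    show (∑ i : Fin (k+1) → Fin n, ∑ j : Fin (k+1) → Fin n,
        gkdelta (Fin.cons p i) (Fin.cons q j) * ∏ a : Fin (k+1), A a (i a) (j a)) = _
    simp only [e, Finset.sum_sub_distrib, ← Finset.mul_sum]
    congr 1
    rw [sum_swap3]
    exact Finset.sum_congr rfl fun m _ => S_eq A hA m p q
  rw [lhs_eq]
  simp only [Matrix.sub_apply, Matrix.smul_apply, Matrix.one_apply, Matrix.sum_apply,
    smul_eq_mul, mul_ite, mul_one, mul_zero, ite_mul, one_mul, zero_mul]

lemma range_ite_sum {M : Type*} [AddCommMonoid M] (X Y : M) :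
    ∀ N l : ℕ, l ≤ N → ∑ i ∈ Finset.range N, (if i < l then X else Y)
      = l • X + (N - l) • Y := by
  intro N
  induction N with
  | zero => intro l hl; simp [Nat.le_zero.mp hl]
  | succ N ih =>
      intro l hl
      rw [Finset.sum_range_succ]
      rcases Nat.lt_or_ge N l with h | h
      · have hle : l = N + 1 := by omega
        subst hle
        rw [if_pos (by omega)]
        rw [Finset.sum_congr rfl (fun i hi => if_pos (by
          have := Finset.mem_range.mp hi; omega))]
        rw [Finset.sum_const, Finset.card_range, Nat.sub_self]
        rw [succ_nsmul]
        simp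
      · rw [if_neg (by omega), ih l h]
        have h2 : N + 1 - l = (N - l) + 1 := by omega
        rw [h2, succ_nsmul, add_assoc]

lemma count_sum {M : Type*} [AddCommMonoid M] (k l : ℕ) (hl : l ≤ k + 1) (X Y : M) :
    ∑ m : Fin (k+1), (if (m : ℕ) < l then X else Y) = l • X + (k + 1 - l) • Y := by
  rw [Fin.sum_univ_eq_sum_range (fun i => if i < l then X else Y) (k+1)]
  exact range_ite_sum X Y (k+1) l hl

lemma val_succAbove {k : ℕ} (m : Fin (k+1)) (c : Fin k) :
    ((m.succAbove c) : ℕ) = if (c : ℕ) < (m : ℕ) then (c : ℕ) else (c : ℕ) + 1 := by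
  by_cases h : Fin.castSucc c < m
  · rw [Fin.succAbove_of_castSucc_lt _ _ h, Fin.coe_castSucc,
      if_pos (by simpa [Fin.lt_def] using h)]
  · rw [Fin.succAbove_of_le_castSucc _ _ (Fin.not_lt.mp h), Fin.val_succ,
      if_neg (by simp [Fin.lt_def] at h; omega)]

lemma Umat_polNewton (n k : ℕ) (A : Fin k → Matrix (Fin n) (Fin n) ℝ) :
    Umat n k A = (Nat.factorial k : ℝ) • polNewton n k A := by
  ext p q
  show (∑ i : Fin k → Fin n, ∑ j : Fin k → Fin n,
      gkdelta (Fin.cons p i) (Fin.cons q j) * ∏ a : Fin k, A a (i a) (j a)) = _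
  rw [Matrix.smul_apply]
  show _ = (Nat.factorial k : ℝ) • ((1 / (Nat.factorial k : ℝ)) *
    ∑ i : Fin k → Fin n, ∑ j : Fin k → Fin n,
      gkdelta (Fin.cons p i) (Fin.cons q j) * ∏ a : Fin k, A a (i a) (j a))
  rw [smul_eq_mul, ← mul_assoc, mul_one_div,
    div_self (by exact_mod_cast Nat.factorial_ne_zero k), one_mul]

lemma Vsum_polSigma (n k : ℕ) (A : Fin (k+1) → Matrix (Fin n) (Fin n) ℝ) :
    Vsum n (k+1) A = (Nat.factorial k : ℝ) * polSigma n (k+1) A := by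
  show (∑ i : Fin (k+1) → Fin n, ∑ j : Fin (k+1) → Fin n,
      gkdelta i j * ∏ a : Fin (k+1), A a (i a) (j a)) = _
  rw [polSigma]
  rw [show (k + 1 - 1) = k from rfl]
  rw [← mul_assoc, mul_one_div, div_self (by exact_mod_cast Nat.factorial_ne_zero k), one_mul]

lemma pat_succAbove_lt {k l : ℕ} {α : Type*} (B C : α) (hl : 1 ≤ l)
    (m : Fin (k+1)) (hm : (m : ℕ) < l) (c : Fin k) :
    (if ((m.succAbove c : Fin (k+1)) : ℕ) < l then B else C)
      = if (c : ℕ) < l - 1 then B else C := by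
  rw [val_succAbove]
  by_cases h : (c : ℕ) < (m : ℕ)
  · rw [if_pos h]; exact if_congr (by omega) rfl rfl
  · rw [if_neg h]; exact if_congr (by omega) rfl rfl

lemma pat_succAbove_ge {k l : ℕ} {α : Type*} (B C : α)
    (m : Fin (k+1)) (hm : l ≤ (m : ℕ)) (c : Fin k) :
    (if ((m.succAbove c : Fin (k+1)) : ℕ) < l then B else C)
      = if (c : ℕ) < l then B else C := by
  rw [val_succAbove]
  by_cases h : (c : ℕ) < (m : ℕ)
  · rw [if_pos h]
  · rw [if_neg h]; exact if_congr (by omega) rfl rfl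

open Matrix in
lemma key (n k l : ℕ) (hl : 1 ≤ l) (hlk : l ≤ k)
    (B C : Matrix (Fin n) (Fin n) ℝ) (hB : Bᵀ = B) (hC : Cᵀ = C) :
    ((k:ℝ) + 1 - l) • (polNewton n k (fun a : Fin k => if (a:ℕ) < l then B else C) * C)
      = polSigma n (k+1) (fun a : Fin (k+1) => if (a:ℕ) < l then B else C)
          • (1 : Matrix (Fin n) (Fin n) ℝ)
        - ((k:ℝ) + 1) • polNewton n (k+1) (fun a : Fin (k+1) => if (a:ℕ) < l then B else C)
        - (l:ℝ) • (polNewton n k (fun a : Fin k => if (a:ℕ) < l - 1 then B else C) * B) := by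
  set A : Fin (k+1) → Matrix (Fin n) (Fin n) ℝ :=
    (fun a : Fin (k+1) => if (a:ℕ) < l then B else C) with hA
  have hAsymm : ∀ a, (A a)ᵀ = A a := by
    intro a; rw [hA]; dsimp only; split_ifs; exacts [hB, hC]
  have h1 := M1 A hAsymm
  have hterm : ∀ m : Fin (k+1), Umat n k (fun c => A (m.succAbove c)) * A m
      = if (m : ℕ) < l then
          Umat n k (fun c : Fin k => if (c:ℕ) < l - 1 then B else C) * B
        else Umat n k (fun c : Fin k => if (c:ℕ) < l then B else C) * C := by
    intro m
    by_cases hm : (m : ℕ) < l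
    · rw [if_pos hm,
        show (fun c : Fin k => A (m.succAbove c))
          = (fun c : Fin k => if (c:ℕ) < l - 1 then B else C) from
          funext fun c => pat_succAbove_lt B C hl m hm c,
        show A m = B from by rw [hA]; exact if_pos hm]
    · rw [if_neg hm,
        show (fun c : Fin k => A (m.succAbove c))
          = (fun c : Fin k => if (c:ℕ) < l then B else C) from
          funext fun c => pat_succAbove_ge B C m (by omega) c,
        show A m = C from by rw [hA]; exact if_neg hm]
  rw [Finset.sum_congr rfl (fun m _ => hterm m), count_sum k l (by omega)] at h1
  rw [Umat_polNewton n (k+1) A, Umat_polNewton n k, Umat_polNewton n k,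
    Vsum_polSigma n k A] at h1
  rw [← Nat.cast_smul_eq_nsmul ℝ l, ← Nat.cast_smul_eq_nsmul ℝ (k + 1 - l)] at h1
  have hcast : ((k + 1 - l : ℕ) : ℝ) = (k:ℝ) + 1 - l := by
    push_cast [Nat.cast_sub (by omega : l ≤ k + 1)]; ring
  rw [hcast, Nat.factorial_succ] at h1
  have hF : (Nat.factorial k : ℝ) ≠ 0 := by exact_mod_cast Nat.factorial_ne_zero k
  push_cast at h1
  rw [smul_mul_assoc, smul_mul_assoc] at h1
  apply smul_right_injective (Matrix (Fin n) (Fin n) ℝ) hF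
  linear_combination (norm := module) h1

/-- Recursion identity for polarized Newton tensors (Lemma 2.2 of the paper):
for symmetric `B`, `C` and `1 ≤ l ≤ k−1`,
`[T_{k-1}](B^l,C^{k-1-l})·C = (C(k,l)/(k·C(k-1,l)))·Σ_k(B^l,C^{k-l})·Id
− (C(k,l)/C(k-1,l))·[Tₖ](B^l,C^{k-l}) − (C(k-1,l-1)/C(k-1,l))·[T_{k-1}](B^{l-1},C^{k-l})·B`. -/
theorem polNewton_recursion (n k l : ℕ) (hk : 1 ≤ k) (hl : 1 ≤ l) (hlk : l ≤ k - 1)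
    (B C : Matrix (Fin n) (Fin n) ℝ) (hB : B.IsHermitian) (hC : C.IsHermitian) :
    polNewton n (k - 1) (fun a : Fin (k - 1) => if (a : ℕ) < l then B else C) * C
      = ((Nat.choose k l : ℝ) / (k * Nat.choose (k - 1) l)) •
          (polSigma n k (fun a : Fin k => if (a : ℕ) < l then B else C) •
            (1 : Matrix (Fin n) (Fin n) ℝ))
        - ((Nat.choose k l : ℝ) / (Nat.choose (k - 1) l)) •
            polNewton n k (fun a : Fin k => if (a : ℕ) < l then B else C)
        - ((Nat.choose (k - 1) (l - 1) : ℝ) / (Nat.choose (k - 1) l)) •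
            (polNewton n (k - 1) (fun a : Fin (k - 1) => if (a : ℕ) < l - 1 then B else C) * B) := by
  obtain ⟨k', rfl⟩ : ∃ k', k = k' + 1 := ⟨k - 1, by omega⟩
  simp only [Nat.add_sub_cancel] at hlk ⊢
  have hBs : Matrix.transpose B = B := by rw [← Matrix.conjTranspose_eq_transpose_of_trivial]; exact hB.eq
  have hCs : Matrix.transpose C = C := by rw [← Matrix.conjTranspose_eq_transpose_of_trivial]; exact hC.eq
  have hkey := key n k' l hl hlk B C hBs hCs
  push_cast
  have hx : ((k'.choose l : ℕ) : ℝ) ≠ 0 := Nat.cast_ne_zero.mpr (Nat.choose_pos hlk).ne'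
  have hlK : (l:ℝ) ≤ (k':ℝ) := Nat.cast_le.mpr hlk
  have hd : ((k':ℝ) + 1 - (l:ℝ)) ≠ 0 := by linarith
  have h2l : l - 1 + 1 = l := by omega
  have hpascal : (((k'+1).choose l : ℕ) : ℝ)
      = ((k'.choose l : ℕ) : ℝ) + ((k'.choose (l-1) : ℕ) : ℝ) := by
    rw [← h2l, Nat.choose_succ_succ k' (l-1)]
    push_cast
    ring
  have hrel : ((k'.choose l : ℕ) : ℝ) * l
      = ((k'.choose (l-1) : ℕ) : ℝ) * ((k':ℝ) + 1 - l) := by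
    have h := Nat.choose_succ_right_eq k' (l-1)
    rw [h2l] at h
    have h4 : ((k'.choose l : ℕ) : ℝ) * ((l:ℕ) : ℝ)
        = ((k'.choose (l-1) : ℕ) : ℝ) * ((k' - (l-1) : ℕ) : ℝ) := by exact_mod_cast h
    have h3 : ((k' - (l-1) : ℕ) : ℝ) = (k':ℝ) + 1 - l := by
      rw [Nat.cast_sub (by omega : l - 1 ≤ k'), Nat.cast_sub hl]
      push_cast
      ring
    rw [h3] at h4
    exact h4
  have e1 : (((k'+1).choose l : ℕ) : ℝ) / (((k':ℝ) + 1) * ((k'.choose l : ℕ) : ℝ))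
      = ((k':ℝ) + 1 - l)⁻¹ := by
    rw [hpascal]
    field_simp
    linear_combination -hrel
  have e2 : (((k'+1).choose l : ℕ) : ℝ) / ((k'.choose l : ℕ) : ℝ)
      = ((k':ℝ) + 1 - l)⁻¹ * ((k':ℝ) + 1) := by
    rw [hpascal]
    field_simp
    linear_combination -hrel
  have e3 : ((k'.choose (l-1) : ℕ) : ℝ) / ((k'.choose l : ℕ) : ℝ)
      = ((k':ℝ) + 1 - l)⁻¹ * (l:ℝ) := by
    field_simp
    linear_combination -hrel
  have h2 := congrArg (fun X : Matrix (Fin n) (Fin n) ℝ => ((k':ℝ) + 1 - (l:ℝ))⁻¹ • X) hkey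
  simp only [smul_sub, smul_smul] at h2
  rw [inv_mul_cancel₀ hd, one_smul] at h2
  rw [smul_smul, e1, e2, e3]
  exact h2
end
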